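/- arXiv:2503.15440 — 6 statements merged into one kernel-verified Lean document; each statement's English description precedes it below -/
import Mathlib

section
/- Let λ and μ be partitions of n with λ ⊴ μ in the dominance order. Then n(λ') ≤ n(μ'), with equality if and only if λ = μ. Here n(ν) := Σ_{i≥1} (i−1)ν_i for a partition ν, and ν' denotes the conjugate partition. -/
open Finset

/-- For antitone `ν`, membership in the filter is an initial segment. -/
private lemma seg_iff {n : ℕ} (ν : ℕ → ℕ) (hanti : ∀ i j, i ≤ j → ν j ≤ ν i)
    {m i : ℕ} (hi : i < n) :
    m + 1 ≤ ν i ↔ i < ((range n).filter fun i => m + 1 ≤ ν i).card := by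
  constructor
  · intro h
    have hsub : range (i + 1) ⊆ (range n).filter fun i => m + 1 ≤ ν i := by
      intro j hj
      simp only [mem_range] at hj
      simp only [mem_filter, mem_range]
      exact ⟨by omega, le_trans h (hanti j i (by omega))⟩
    have := card_le_card hsub
    simpa using this
  · intro h
    by_contra hc
    push_neg at hc
    have hsub : ((range n).filter fun i => m + 1 ≤ ν i) ⊆ range i := by
      intro j hj
      simp only [mem_filter, mem_range] at hj
      simp only [mem_range]
      by_contra hji
      push_neg at hji
      have := hanti i j hji
      omega
    have := card_le_card hsub
    simp only [card_range] at this
    omega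

private lemma row_eq {n a : ℕ} (ha : a ≤ n) :
    (∑ j ∈ range n, if j + 1 ≤ a then j else 0) = ∑ k ∈ range n, (a - (k + 1)) := by
  have h1 : (∑ j ∈ range n, if j + 1 ≤ a then j else 0) = ∑ j ∈ range a, j := by
    rw [← sum_filter]
    apply sum_congr _ (fun _ _ => rfl)
    ext j
    simp only [mem_filter, mem_range]
    omega
  have h2 : (∑ k ∈ range n, (a - (k + 1))) = ∑ k ∈ range a, (a - (k + 1)) := by
    symm
    apply sum_subset (range_subset_range.mpr ha)
    intro x _ hx
    simp only [mem_range] at hx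
    omega
  rw [h1, h2, ← Finset.sum_range_reflect (fun j => j) a]
  apply sum_congr rfl
  intro k hk
  simp only [mem_range] at hk
  omega

/-- The key identity: `n(ν') = ∑_k ∑_i (ν_i ∸ (k+1))`. -/
private lemma A_eq {n : ℕ} (ν : ℕ → ℕ) (hle : ∀ i, i < n → ν i ≤ n) :
    ∑ j ∈ range n, j * ((range n).filter fun i => j + 1 ≤ ν i).card
      = ∑ k ∈ range n, ∑ i ∈ range n, (ν i - (k + 1)) := by
  have h1 : ∀ j : ℕ, j * ((range n).filter fun i => j + 1 ≤ ν i).card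
      = ∑ i ∈ range n, (if j + 1 ≤ ν i then j else 0) := by
    intro j
    rw [← sum_filter, sum_const, smul_eq_mul, mul_comm]
  calc ∑ j ∈ range n, j * ((range n).filter fun i => j + 1 ≤ ν i).card
      = ∑ j ∈ range n, ∑ i ∈ range n, (if j + 1 ≤ ν i then j else 0) := by
        exact sum_congr rfl fun j _ => h1 j
    _ = ∑ i ∈ range n, ∑ j ∈ range n, (if j + 1 ≤ ν i then j else 0) := sum_comm
    _ = ∑ i ∈ range n, ∑ k ∈ range n, (ν i - (k + 1)) := by
        exact sum_congr rfl fun i hi => row_eq (hle i (mem_range.mp hi))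
    _ = ∑ k ∈ range n, ∑ i ∈ range n, (ν i - (k + 1)) := sum_comm

/-- The dominance inequality for truncated sums. -/
private lemma key_ineq {n : ℕ} (lam mu : ℕ → ℕ)
    (hlanti : ∀ i j, i ≤ j → lam j ≤ lam i)
    (hdom : ∀ k, ∑ i ∈ Finset.range k, lam i ≤ ∑ i ∈ Finset.range k, mu i) (k : ℕ) :
    ∑ i ∈ range n, (lam i - (k + 1)) ≤ ∑ i ∈ range n, (mu i - (k + 1)) := by
  set s := ((range n).filter fun i => k + 1 ≤ lam i).card with hs
  have hsn : s ≤ n := le_trans (card_filter_le _ _) (by simp)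
  have hge : ∀ i < s, k + 1 ≤ lam i := by
    intro i hi
    exact (seg_iff lam hlanti (lt_of_lt_of_le hi hsn)).2 hi
  have h1 : ∑ i ∈ range n, (lam i - (k + 1)) = ∑ i ∈ range s, (lam i - (k + 1)) := by
    symm
    apply sum_subset (range_subset_range.mpr hsn)
    intro i hi his
    simp only [mem_range] at hi his
    have : ¬ (k + 1 ≤ lam i) := by
      intro h
      exact his ((seg_iff lam hlanti hi).1 h)
    omega
  have h2 : ∑ i ∈ range s, (lam i - (k + 1)) + s * (k + 1) = ∑ i ∈ range s, lam i := by
    rw [show s * (k + 1) = ∑ _i ∈ range s, (k + 1) by simp [mul_comm], ← sum_add_distrib]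
    exact sum_congr rfl fun i hi => Nat.sub_add_cancel (hge i (mem_range.mp hi))
  have h3 : ∑ i ∈ range s, mu i ≤ ∑ i ∈ range s, (mu i - (k + 1)) + s * (k + 1) := by
    rw [show s * (k + 1) = ∑ _i ∈ range s, (k + 1) by simp [mul_comm], ← sum_add_distrib]
    exact sum_le_sum fun i _ => le_tsub_add
  have h4 : ∑ i ∈ range s, (mu i - (k + 1)) ≤ ∑ i ∈ range n, (mu i - (k + 1)) :=
    sum_le_sum_of_subset (range_subset_range.mpr hsn)
  have h5 := hdom s
  omega

/-- For partitions `λ ⊴ μ` of `n` (in dominance order), `n(λ') ≤ n(μ')`, with equality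
iff `λ = μ`. Here partitions of `n` are encoded as antitone functions `ℕ → ℕ` supported
on `{0, ..., n-1}` with total sum `n` (parts `λ_{i+1} = lam i`), the conjugate partition
is `λ'_{j+1} = #{i < n : lam i ≥ j+1}`, and `n(ν) = Σ_{i≥1} (i-1) ν_i`. -/
theorem stmt_3 (n : ℕ) (lam mu : ℕ → ℕ)
    (hlanti : ∀ i j, i ≤ j → lam j ≤ lam i) (hl0 : ∀ i, n ≤ i → lam i = 0)
    (hlsum : ∑ i ∈ Finset.range n, lam i = n)
    (hmanti : ∀ i j, i ≤ j → mu j ≤ mu i) (hm0 : ∀ i, n ≤ i → mu i = 0)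
    (hmsum : ∑ i ∈ Finset.range n, mu i = n)
    (hdom : ∀ k, ∑ i ∈ Finset.range k, lam i ≤ ∑ i ∈ Finset.range k, mu i) :
    (∑ j ∈ Finset.range n, j * ((Finset.range n).filter fun i => j + 1 ≤ lam i).card ≤
      ∑ j ∈ Finset.range n, j * ((Finset.range n).filter fun i => j + 1 ≤ mu i).card) ∧
    ((∑ j ∈ Finset.range n, j * ((Finset.range n).filter fun i => j + 1 ≤ lam i).card =
      ∑ j ∈ Finset.range n, j * ((Finset.range n).filter fun i => j + 1 ≤ mu i).card) ↔
      lam = mu) := by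
  have hln : ∀ i, i < n → lam i ≤ n := by
    intro i hi
    calc lam i ≤ ∑ i ∈ range n, lam i :=
      single_le_sum (fun _ _ => Nat.zero_le _) (mem_range.mpr hi)
    _ = n := hlsum
  have hmn : ∀ i, i < n → mu i ≤ n := by
    intro i hi
    calc mu i ≤ ∑ i ∈ range n, mu i :=
      single_le_sum (fun _ _ => Nat.zero_le _) (mem_range.mpr hi)
    _ = n := hmsum
  have hAL := A_eq lam hln
  have hAM := A_eq mu hmn
  have hkey : ∀ k, ∑ i ∈ range n, (lam i - (k + 1)) ≤ ∑ i ∈ range n, (mu i - (k + 1)) :=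
    key_ineq lam mu hlanti hdom
  refine ⟨by rw [hAL, hAM]; exact sum_le_sum fun k _ => hkey k, ?_, fun h => by rw [h]⟩
  intro heq
  rw [hAL, hAM] at heq
  -- termwise equality of truncated sums
  have hE : ∀ k, k < n → ∑ i ∈ range n, (lam i - (k + 1)) = ∑ i ∈ range n, (mu i - (k + 1)) := by
    intro k hk
    exact (Finset.sum_eq_sum_iff_of_le (fun k _ => hkey k)).1 heq k (mem_range.mpr hk)
  -- truncated sums agree for all m
  have hEm : ∀ m : ℕ, ∑ i ∈ range n, (lam i - m) = ∑ i ∈ range n, (mu i - m) := by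
    intro m
    match m with
    | 0 => simpa using hlsum.trans hmsum.symm
    | m + 1 =>
      by_cases hm : m < n
      · exact hE m hm
      · have hl : ∀ i ∈ range n, lam i - (m + 1) = 0 := by
          intro i hi
          have := hln i (mem_range.mp hi)
          omega
        have hr : ∀ i ∈ range n, mu i - (m + 1) = 0 := by
          intro i hi
          have := hmn i (mem_range.mp hi)
          omega
        rw [sum_congr rfl hl, sum_congr rfl hr]
  -- filter cards agree
  have hstep : ∀ (ν : ℕ → ℕ) (k : ℕ),
      ∑ i ∈ range n, (ν i - k)
        = ∑ i ∈ range n, (ν i - (k + 1)) + ((range n).filter fun i => k + 1 ≤ ν i).card := by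
    intro ν k
    rw [card_filter, ← sum_add_distrib]
    apply sum_congr rfl
    intro i _
    split <;> omega
  have hc : ∀ k, ((range n).filter fun i => k + 1 ≤ lam i).card
      = ((range n).filter fun i => k + 1 ≤ mu i).card := by
    intro k
    have h1 := hstep lam k
    have h2 := hstep mu k
    have h3 := hEm k
    have h4 := hEm (k + 1)
    omega
  funext i
  by_cases hi : i < n
  · have hiff : ∀ k, (k + 1 ≤ lam i ↔ k + 1 ≤ mu i) := by
      intro k
      rw [seg_iff lam hlanti hi, seg_iff mu hmanti hi, hc k]
    have h1 := hiff (lam i)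
    have h2 := hiff (mu i)
    omega
  · rw [hl0 i (by omega), hm0 i (by omega)]
end

section
/- Define B_0 = 1 and for n ≥ 1, B_n = Σ_{j=0}^{⌊n/2⌋} (−1)^j q^{binom(j,2)} GaussBinom(n−j, j, q) · [n]_q/[n−j]_q, and A_n = Σ_{j=0}^{⌊n/2⌋} (−1)^j q^{binom(j,2)} GaussBinom(n−j, j, q) with A_m = 0 for m < 0. Then for all n ≥ 1, B_n = A_n − q^{n−1} A_{n−2}. -/
/-- The q-integer `[n]_q = (q^n - 1)/(q - 1)`. -/
noncomputable def qint (q : ℝ) (n : ℕ) : ℝ := (q ^ n - 1) / (q - 1)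

/-- The q-factorial `[n]_q!`. -/
noncomputable def qfact (q : ℝ) (n : ℕ) : ℝ := ∏ i ∈ Finset.range n, qint q (i + 1)

/-- The Gaussian binomial coefficient `[l]_q! / ([r]_q! [l-r]_q!)`. -/
noncomputable def qbinom (q : ℝ) (l r : ℕ) : ℝ := qfact q l / (qfact q r * qfact q (l - r))

/-- `A_n = Σ_{j=0}^{⌊n/2⌋} (-1)^j q^{binom(j,2)} GaussBinom(n-j, j, q)`, extended by
`A_m = 0` for `m < 0`. -/
noncomputable def Aseq (q : ℝ) (m : ℤ) : ℝ :=
  if m < 0 then 0 else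
    ∑ j ∈ Finset.range (m.toNat / 2 + 1),
      (-1 : ℝ) ^ j * q ^ (j.choose 2) * qbinom q (m.toNat - j) j

/-- `B_0 = 1` and, for `n ≥ 1`,
`B_n = Σ_{j=0}^{⌊n/2⌋} (-1)^j q^{binom(j,2)} GaussBinom(n-j, j, q) ⋅ [n]_q/[n-j]_q`. -/
noncomputable def Bseq (q : ℝ) (n : ℕ) : ℝ :=
  if n = 0 then 1 else
    ∑ j ∈ Finset.range (n / 2 + 1),
      (-1 : ℝ) ^ j * q ^ (j.choose 2) * qbinom q (n - j) j * (qint q n / qint q (n - j))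

lemma qsub_ne (q : ℝ) (hq : 1 < q) : q - 1 ≠ 0 := sub_ne_zero.mpr (ne_of_gt hq)

lemma qint_pos (q : ℝ) (hq : 1 < q) {n : ℕ} (hn : 1 ≤ n) : 0 < qint q n := by
  unfold qint
  apply div_pos
  · have : (1:ℝ) < q ^ n := one_lt_pow₀ hq (by omega)
    linarith
  · linarith

lemma qint_zero (q : ℝ) : qint q 0 = 0 := by simp [qint]

lemma qfact_pos (q : ℝ) (hq : 1 < q) (n : ℕ) : 0 < qfact q n := by
  unfold qfact
  apply Finset.prod_pos
  intro i _
  exact qint_pos q hq (by omega)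

lemma qfact_succ (q : ℝ) (n : ℕ) : qfact q (n+1) = qfact q n * qint q (n+1) :=
  Finset.prod_range_succ _ _

lemma qint_add (q : ℝ) (hq : 1 < q) (a b : ℕ) :
    qint q (a + b) = qint q a + q ^ a * qint q b := by
  unfold qint
  rw [pow_add]
  field_simp
  ring

lemma qbinom_shift (q : ℝ) (hq : 1 < q) (a m : ℕ) (ham : a ≤ m) :
    qbinom q (m+1) (a+1) * (qint q (a+1) / qint q (m+1)) = qbinom q m a := by
  unfold qbinom
  have h1 : (m+1) - (a+1) = m - a := by omega
  rw [h1, qfact_succ, qfact_succ]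
  have h2 : qint q (a+1) ≠ 0 := (qint_pos q hq (by omega)).ne'
  have h3 : qint q (m+1) ≠ 0 := (qint_pos q hq (by omega)).ne'
  have h4 : qfact q a ≠ 0 := (qfact_pos q hq a).ne'
  have h5 : qfact q m ≠ 0 := (qfact_pos q hq m).ne'
  have h6 : qfact q (m - a) ≠ 0 := (qfact_pos q hq _).ne'
  field_simp

/-- For all `n ≥ 1`, `B_n = A_n - q^{n-1} A_{n-2}`. -/
theorem stmt_6 (q : ℝ) (hq : 1 < q) (n : ℕ) (hn : 1 ≤ n) :
    Bseq q n = Aseq q n - q ^ (n - 1) * Aseq q ((n : ℤ) - 2) := by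
  have hA : Aseq q (n:ℤ) = ∑ j ∈ Finset.range (n/2+1),
      (-1:ℝ)^j * q^(j.choose 2) * qbinom q (n-j) j := by
    unfold Aseq
    rw [if_neg (by omega)]
    simp
  rcases eq_or_lt_of_le hn with h1 | h2
  · -- n = 1
    have h1' : n = 1 := h1.symm
    subst h1'
    have hAm : Aseq q ((1:ℕ):ℤ) - 2 * 0 = Aseq q 1 := by norm_num
    have : Aseq q ((1:ℤ) - 2) = 0 := by unfold Aseq; rw [if_pos (by omega)]
    rw [show ((1:ℕ):ℤ) - 2 = (1:ℤ) - 2 by norm_num, this, hA]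
    have hq1 : qint q 1 = 1 := by
      unfold qint; rw [pow_one]; exact div_self (qsub_ne q hq)
    simp [Bseq, qbinom, qfact, hq1]
  · -- 2 ≤ n
    have hA2 : Aseq q ((n:ℤ)-2) = ∑ j ∈ Finset.range ((n-2)/2+1),
        (-1:ℝ)^j * q^(j.choose 2) * qbinom q (n-2-j) j := by
      unfold Aseq
      rw [if_neg (by omega)]
      have ht : ((n:ℤ)-2).toNat = n - 2 := by omega
      rw [ht]
    have hB : Bseq q n = ∑ j ∈ Finset.range (n/2+1),
        (-1:ℝ)^j * q^(j.choose 2) * qbinom q (n-j) j * (qint q n / qint q (n-j)) := by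
      unfold Bseq; rw [if_neg (by omega)]
    rw [hB, hA, hA2]
    have key : (∑ j ∈ Finset.range (n/2+1),
        (-1:ℝ)^j * q^(j.choose 2) * qbinom q (n-j) j * (qint q n / qint q (n-j)))
      - (∑ j ∈ Finset.range (n/2+1), (-1:ℝ)^j * q^(j.choose 2) * qbinom q (n-j) j)
      = -(q^(n-1) * ∑ j ∈ Finset.range ((n-2)/2+1),
          (-1:ℝ)^j * q^(j.choose 2) * qbinom q (n-2-j) j) := by
      rw [← Finset.sum_sub_distrib]
      have step1 : ∀ j ∈ Finset.range (n/2+1),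
          (-1:ℝ)^j * q^(j.choose 2) * qbinom q (n-j) j * (qint q n / qint q (n-j))
          - (-1:ℝ)^j * q^(j.choose 2) * qbinom q (n-j) j
          = (-1:ℝ)^j * q^(j.choose 2) * q^(n-j) * (qbinom q (n-j) j * (qint q j / qint q (n-j))) := by
        intro j hj
        have hj2 : 2*j ≤ n := by
          have := Finset.mem_range.mp hj; omega
        have hnz : qint q (n-j) ≠ 0 := (qint_pos q hq (by omega)).ne'
        have hsplit : qint q n = qint q (n-j) + q^(n-j) * qint q j := by
          have h := qint_add q hq (n-j) j
          rwa [Nat.sub_add_cancel (by omega)] at h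
        rw [hsplit]
        field_simp
        ring
      rw [Finset.sum_congr rfl step1, Finset.sum_range_succ']
      rw [qint_zero]
      simp only [zero_div, mul_zero, add_zero]
      have hr : n/2 = (n-2)/2 + 1 := by omega
      rw [hr, Finset.mul_sum, ← Finset.sum_neg_distrib]
      apply Finset.sum_congr rfl
      intro i hi
      have hi2 : 2*(i+1) ≤ n := by have := Finset.mem_range.mp hi; omega
      have he : n - (i+1) = (n-i-2)+1 := by omega
      rw [he, qbinom_shift q hq i (n-i-2) (by omega)]
      have he2 : n - 2 - i = n - i - 2 := by omega
      rw [he2]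
      have hc : (i+1).choose 2 = i.choose 2 + i := by
        rw [Nat.choose_succ_succ, Nat.choose_one_right, Nat.add_comm]
      rw [hc, pow_add]
      have hq2 : q^i * q^((n-i-2)+1) = q^(n-1) := by
        rw [← pow_add]; congr 1; omega
      linear_combination (-(-1:ℝ)^i * q^(i.choose 2) * (qbinom q (n-i-2) i)) * hq2
    linarith [key]
end

section
/- Let n ≥ 1 and let the sequences satisfy n = n_1 ≥ n_2 ≥ ⋯ ≥ n_ℓ > n_{ℓ+1} = 0 (positive integers) and m = r_0 ≥ r_1 ≥ ⋯ ≥ r_ℓ ≥ r_{ℓ+1} = 0 (non-negative integers) with r_i − r_{i+1} ≤ n_i − n_{i+1} for 1 ≤ i ≤ ℓ. Then the number of n × m matrices A over F_q such that rank(A_i) = r_i for each 1 ≤ i ≤ ℓ, where A_i is the submatrix of A consisting of the first n_i rows, equals ∏_{j=1}^{ℓ} q^{r_{j+1}(n_j − n_{j+1})} · GaussBinom(m − r_{j+1}, r_j − r_{j+1}, q) · C^{r_j − r_{j+1}}_{n_j − n_{j+1}}, where C^r_l = (q^l − 1)(q^l − q)⋯(q^l − q^{r−1}). -/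
set_option linter.unusedSectionVars false
set_option linter.unusedVariables false
set_option maxHeartbeats 1000000


/-- The Gaussian binomial coefficient evaluated at `q`, via the Pascal-type recurrence
`[n+1, k+1]_q = [n, k]_q + q^{k+1} [n, k+1]_q`. -/
def qbinomNat (q : ℕ) : ℕ → ℕ → ℕ
  | _, 0 => 1
  | 0, _ + 1 => 0
  | a + 1, b + 1 => qbinomNat q a b + q ^ (b + 1) * qbinomNat q a (b + 1)

open Finset Submodule Module Set Matrix

section helpers

lemma natCard_sigma {ι : Type*} [Fintype ι] (f : ι → Type*) [∀ i, Finite (f i)] :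
    Nat.card (Σ i, f i) = ∑ i, Nat.card (f i) := by
  have : ∀ i, Fintype (f i) := fun i => Fintype.ofFinite _
  simp [Nat.card_eq_fintype_card]

lemma natCard_eq_mul_of_fiber {X I : Type*} [Finite X] [Finite I] (f : X → I) (E : ℕ)
    (h : ∀ i, Nat.card {x // f x = i} = E) : Nat.card X = Nat.card I * E := by
  have : Fintype I := Fintype.ofFinite _
  rw [← Nat.card_congr (Equiv.sigmaFiberEquiv f), natCard_sigma]
  simp [h, Nat.card_eq_fintype_card]

lemma natCard_prod_subtype {X Y : Type*} [Finite X] [Finite Y] (P : X → Prop) (Q : X → Y → Prop)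
    (E : ℕ) (h : ∀ x, P x → Nat.card {y // Q x y} = E) :
    Nat.card {p : X × Y // P p.1 ∧ Q p.1 p.2} = Nat.card {x // P x} * E := by
  have : Fintype {x // P x} := Fintype.ofFinite _
  have e : {p : X × Y // P p.1 ∧ Q p.1 p.2} ≃ Σ x : {x // P x}, {y // Q x.1 y} :=
    { toFun := fun p => ⟨⟨p.1.1, p.2.1⟩, ⟨p.1.2, p.2.2⟩⟩
      invFun := fun s => ⟨⟨s.1.1, s.2.1⟩, s.1.2, s.2.2⟩
      left_inv := fun p => rfl
      right_inv := fun s => rfl }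
  rw [Nat.card_congr e, natCard_sigma]
  simp only [fun x : {x // P x} => h x.1 x.2]
  simp [Nat.card_eq_fintype_card, mul_comm]

end helpers

section arith

variable (q : ℕ)

/-- `G l r = ∏_{j<r} (q^(l-j) - 1)` -/
def Gprod (l r : ℕ) : ℕ := ∏ j ∈ range r, (q ^ (l - j) - 1)

lemma Gprod_succ_succ (l r : ℕ) : Gprod q (l + 1) (r + 1) = (q ^ (l + 1) - 1) * Gprod q l r := by
  rw [Gprod, prod_range_succ']
  simp only [Nat.succ_sub_succ_eq_sub]
  rw [Nat.sub_zero, mul_comm]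
  rfl

lemma Gprod_succ (l r : ℕ) : Gprod q l (r + 1) = Gprod q l r * (q ^ (l - r) - 1) :=
  prod_range_succ _ _

lemma Gprod_zero_of_lt {l r : ℕ} (h : l < r) : Gprod q l r = 0 := by
  apply prod_eq_zero (i := l) (by simpa using h)
  simp

lemma qbinom_mul_Gprod (hq : 1 ≤ q) : ∀ d s, qbinomNat q d s * Gprod q s s = Gprod q d s := by
  intro d
  induction d with
  | zero =>
    intro s
    cases s with
    | zero => simp [qbinomNat, Gprod]
    | succ s =>
      rw [qbinomNat]
      simp [Gprod_zero_of_lt q (Nat.succ_pos s)]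
  | succ d ih =>
    intro s
    cases s with
    | zero => simp [qbinomNat, Gprod]
    | succ s =>
      rw [qbinomNat]
      have step : (qbinomNat q d s + q ^ (s + 1) * qbinomNat q d (s + 1)) *
          Gprod q (s + 1) (s + 1) =
          (q ^ (s + 1) - 1) * Gprod q d s + q ^ (s + 1) * Gprod q d (s + 1) := by
        calc (qbinomNat q d s + q ^ (s + 1) * qbinomNat q d (s + 1)) * Gprod q (s + 1) (s + 1)
            = (q ^ (s + 1) - 1) * (qbinomNat q d s * Gprod q s s) +
              q ^ (s + 1) * (qbinomNat q d (s + 1) * Gprod q (s + 1) (s + 1)) := by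
              rw [Gprod_succ_succ]; ring
          _ = _ := by rw [ih s, ih (s + 1)]
      rw [step, Gprod_succ_succ]
      rcases lt_or_ge d s with hds | hsd
      · rw [Gprod_zero_of_lt q hds, Gprod_zero_of_lt q (by omega : d < s + 1)]
        simp
      · rw [Gprod_succ]
        have e1 : q ^ (s + 1) * (q ^ (d - s) - 1) = q ^ (d + 1) - q ^ (s + 1) := by
          rw [Nat.mul_sub, mul_one, ← pow_add]
          congr 2
          omega
        have e2 : 1 ≤ q ^ (s + 1) := Nat.one_le_pow _ _ hq
        have e3 : q ^ (s + 1) ≤ q ^ (d + 1) := Nat.pow_le_pow_right hq (by omega)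
        have : (q ^ (s + 1) - 1) + q ^ (s + 1) * (q ^ (d - s) - 1) = q ^ (d + 1) - 1 := by omega
        calc (q ^ (s + 1) - 1) * Gprod q d s + q ^ (s + 1) * (Gprod q d s * (q ^ (d - s) - 1))
            = ((q ^ (s + 1) - 1) + q ^ (s + 1) * (q ^ (d - s) - 1)) * Gprod q d s := by ring
          _ = (q ^ (d + 1) - 1) * Gprod q d s := by rw [this]

lemma prod_pow_sub_pow (hq : 1 ≤ q) (l r : ℕ) :
    ∏ t ∈ range r, (q ^ l - q ^ t) = q ^ (∑ t ∈ range r, t) * Gprod q l r := by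
  rw [Gprod, ← prod_pow_eq_pow_sum, ← prod_mul_distrib]
  apply prod_congr rfl
  intro t _
  rcases le_or_gt t l with h | h
  · rw [Nat.mul_sub, mul_one, ← pow_add]
    congr 2
    omega
  · have : l - t = 0 := by omega
    rw [this]
    simp only [pow_zero, Nat.sub_self, mul_zero]
    have : q ^ l ≤ q ^ t := Nat.pow_le_pow_right hq (by omega)
    omega

/-- The key arithmetic identity. -/
lemma qbinom_mul_prod (hq : 1 ≤ q) (d s : ℕ) :
    qbinomNat q d s * ∏ t ∈ range s, (q ^ s - q ^ t) = ∏ t ∈ range s, (q ^ d - q ^ t) := by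
  rw [prod_pow_sub_pow q hq, prod_pow_sub_pow q hq, ← mul_assoc, mul_comm (qbinomNat q d s),
    mul_assoc, qbinom_mul_Gprod q hq]

lemma qbinom_zero_of_lt (hq : 2 ≤ q) {d s : ℕ} (h : d < s) : qbinomNat q d s = 0 := by
  have := qbinom_mul_Gprod q (by omega) d s
  rw [Gprod_zero_of_lt q h] at this
  have hG : Gprod q s s ≠ 0 := by
    rw [Gprod]
    have : 0 < ∏ j ∈ range s, (q ^ (s - j) - 1) := by
      apply Finset.prod_pos
      intro j hj
      simp only [Finset.mem_range] at hj
      have : 2 ≤ q ^ (s - j) := le_trans hq (Nat.le_self_pow (by omega) q)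
      omega
    omega
  exact (Nat.mul_eq_zero.mp this).resolve_right hG

end arith

open Finset Submodule Module Set Matrix

section counting

variable {F : Type*} [Field F] [Fintype F]
variable {V : Type*} [AddCommGroup V] [Module F V] [FiniteDimensional F V] [Finite V]

local notation "q" => Fintype.card F

lemma map_equiv_top_iff {W : Type*} [AddCommGroup W] [Module F W] (e : V ≃ₗ[F] W)
    (p : Submodule F V) : p.map (e : V →ₗ[F] W) = ⊤ ↔ p = ⊤ := by
  constructor
  · intro h
    have h2 := congrArg (Submodule.comap (e : V →ₗ[F] W)) h
    rwa [Submodule.comap_map_eq_of_injective (f := (e : V →ₗ[F] W)) e.injective,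
      Submodule.comap_top] at h2
  · rintro rfl
    rw [Submodule.map_top, LinearMap.range_eq_top]
    exact e.surjective

/-- Number of linearly independent `r`-tuples, valid for all `r`. -/
lemma card_indep (r : ℕ) :
    Nat.card {v : Fin r → V // LinearIndependent F v} =
      ∏ t ∈ range r, (q ^ finrank F V - q ^ t) := by
  rcases le_or_gt r (finrank F V) with h | h
  · rw [card_linearIndependent h]
    exact Fin.prod_univ_eq_prod_range (fun t => q ^ finrank F V - q ^ t) r
  · have : IsEmpty {v : Fin r → V // LinearIndependent F v} := by
      constructor
      rintro ⟨v, hv⟩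
      have := hv.fintype_card_le_finrank
      simp only [Fintype.card_fin] at this
      omega
    rw [Nat.card_of_isEmpty]
    exact (Finset.prod_eq_zero (Finset.mem_range.mpr h) (by simp)).symm

lemma span_range_coe {k : ℕ} (U : Submodule F V) (w : Fin k → U) :
    span F (Set.range fun j => ((w j : V))) = Submodule.map U.subtype (span F (Set.range w)) := by
  rw [Submodule.map_span]
  congr 1
  have : (fun j => ((w j : V))) = (U.subtype ∘ w) := rfl
  rw [this, Set.range_comp]

/-- Tuples in `V` spanning `U` correspond to tuples in `U` spanning everything. -/
def spanFiberEquiv (U : Submodule F V) (k : ℕ) :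
    {v : Fin k → V // span F (Set.range v) = U} ≃ {w : Fin k → U // span F (Set.range w) = ⊤} where
  toFun v := ⟨fun j => ⟨v.1 j, (le_of_eq v.2) (subset_span (Set.mem_range_self j))⟩, by
    apply Submodule.map_injective_of_injective U.injective_subtype
    rw [← span_range_coe, Submodule.map_top, Submodule.range_subtype]
    exact v.2⟩
  invFun w := ⟨fun j => ((w.1 j : V)), by
    rw [span_range_coe, w.2, Submodule.map_top, Submodule.range_subtype]⟩
  left_inv v := rfl
  right_inv w := rfl

/-- Count of spanning `k`-tuples of an `s`-dimensional space. -/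
lemma card_span_top (k s : ℕ) (hU : finrank F V = s) :
    Nat.card {w : Fin k → V // span F (Set.range w) = ⊤} = ∏ t ∈ range s, (q ^ k - q ^ t) := by
  -- transfer to `Fin s → F`
  let e : V ≃ₗ[F] (Fin s → F) := LinearEquiv.ofFinrankEq _ _ (by
    rw [hU, Module.finrank_fintype_fun_eq_card, Fintype.card_fin])
  have e2 : {w : Fin k → V // span F (Set.range w) = ⊤} ≃
      {w : Fin k → (Fin s → F) // span F (Set.range w) = ⊤} := by
    refine (Equiv.subtypeEquiv (Equiv.arrowCongr (Equiv.refl _) e.toEquiv) ?_)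
    intro w
    show span F (Set.range w) = ⊤ ↔ span F (Set.range (fun j => e (w j))) = ⊤
    have hr : (fun j => e (w j)) = ((e : V →ₗ[F] (Fin s → F)) ∘ w) := rfl
    rw [hr, Set.range_comp, ← Submodule.map_span, map_equiv_top_iff]
  rw [Nat.card_congr e2]
  -- transpose to linear independence
  have e3 : {w : Fin k → (Fin s → F) // span F (Set.range w) = ⊤} ≃
      {u : Fin s → (Fin k → F) // LinearIndependent F u} := by
    refine Equiv.subtypeEquiv ⟨fun M i j => M j i, fun M i j => M j i, fun _ => rfl, fun _ => rfl⟩ ?_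
    intro M
    show span F (Set.range M) = ⊤ ↔ LinearIndependent F (Matrix.transpose (Matrix.of M))
    set N : Matrix (Fin k) (Fin s) F := Matrix.of M with hN
    show span F (Set.range M) = ⊤ ↔ LinearIndependent F (Matrix.transpose N)
    have h1 : finrank F (span F (Set.range M)) = N.rank := by
      have h := Matrix.rank_eq_finrank_span_cols (Matrix.transpose N)
      rw [Matrix.rank_transpose] at h
      exact h.symm
    have h2 : (Set.range (Matrix.transpose N)).finrank F = N.rank :=
      (Matrix.rank_eq_finrank_span_cols N).symm
    constructor
    · intro h
      apply linearIndependent_iff_card_eq_finrank_span.mpr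
      rw [Fintype.card_fin, h2, ← h1, h,
        finrank_top, Module.finrank_fintype_fun_eq_card, Fintype.card_fin]
    · intro h
      have h := linearIndependent_iff_card_eq_finrank_span.mp h
      rw [Fintype.card_fin, h2] at h
      apply Submodule.eq_top_of_finrank_eq
      rw [h1, ← h, Module.finrank_fintype_fun_eq_card, Fintype.card_fin]
  rw [Nat.card_congr e3, card_indep]
  congr 1
  rw [Module.finrank_fintype_fun_eq_card, Fintype.card_fin]


local instance : Finite (Submodule F V) :=
  Finite.of_injective (fun U => (U : Set V)) SetLike.coe_injective

lemma card_fiber_span_eq (U : Submodule F V) (k s : ℕ) (hU : finrank F U = s) :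
    Nat.card {v : Fin k → V // span F (Set.range v) = U} = ∏ t ∈ range s, (q ^ k - q ^ t) := by
  rw [Nat.card_congr (spanFiberEquiv U k), card_span_top k s hU]

lemma card_grass (s : ℕ) :
    Nat.card {U : Submodule F V // finrank F U = s} = qbinomNat q (finrank F V) s := by
  have hq2 : 1 < q := Fintype.one_lt_card
  set f : {v : Fin s → V // LinearIndependent F v} → {U : Submodule F V // finrank F U = s} :=
    fun v => ⟨span F (Set.range v.1), by rw [finrank_span_eq_card v.2, Fintype.card_fin]⟩ with hf
  have key := natCard_eq_mul_of_fiber f (∏ t ∈ range s, (q ^ s - q ^ t)) (by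
    intro U
    have e1 : {x // f x = U} ≃ {v : Fin s → V // span F (Set.range v) = U.1} :=
      { toFun := fun x => ⟨x.1.1, congrArg Subtype.val x.2⟩
        invFun := fun v => ⟨⟨v.1, by
          rw [linearIndependent_iff_card_eq_finrank_span, Fintype.card_fin]
          show s = finrank F (span F (Set.range v.1))
          rw [v.2, U.2]⟩, Subtype.ext v.2⟩
        left_inv := fun x => Subtype.ext (Subtype.ext rfl)
        right_inv := fun v => Subtype.ext rfl }
    rw [Nat.card_congr e1, card_fiber_span_eq U.1 s s U.2])
  rw [card_indep] at key
  have hid := qbinom_mul_prod q (le_of_lt hq2) (finrank F V) s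
  have hpos : 0 < ∏ t ∈ range s, (q ^ s - q ^ t) := by
    apply Finset.prod_pos
    intro t ht
    simp only [Finset.mem_range] at ht
    have := Nat.pow_lt_pow_right hq2 ht
    omega
  apply Nat.eq_of_mul_eq_mul_right hpos
  rw [hid, ← key]

lemma card_tuple_rank (k s : ℕ) :
    Nat.card {v : Fin k → V // finrank F (span F (Set.range v)) = s} =
      qbinomNat q (finrank F V) s * ∏ t ∈ range s, (q ^ k - q ^ t) := by
  set f : {v : Fin k → V // finrank F (span F (Set.range v)) = s} →
      {U : Submodule F V // finrank F U = s} := fun v => ⟨span F (Set.range v.1), v.2⟩ with hf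
  have key := natCard_eq_mul_of_fiber f (∏ t ∈ range s, (q ^ k - q ^ t)) (by
    intro U
    have e1 : {x // f x = U} ≃ {v : Fin k → V // span F (Set.range v) = U.1} :=
      { toFun := fun x => ⟨x.1.1, congrArg Subtype.val x.2⟩
        invFun := fun v => ⟨⟨v.1, by rw [v.2]; exact U.2⟩, Subtype.ext v.2⟩
        left_inv := fun x => Subtype.ext (Subtype.ext rfl)
        right_inv := fun v => Subtype.ext rfl }
    rw [Nat.card_congr e1, card_fiber_span_eq U.1 k s U.2])
  rw [key, card_grass]

lemma finrank_of_le_quot {W P : Submodule F V} (h : W ≤ P) :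
    finrank F P = finrank F W + finrank F (P.map W.mkQ) := by
  have hrn := LinearMap.finrank_range_add_finrank_ker ((W.mkQ).comp P.subtype)
  rw [LinearMap.range_comp, Submodule.range_subtype, LinearMap.ker_comp, Submodule.ker_mkQ,
    (Submodule.comapSubtypeEquivOfLe h).finrank_eq] at hrn
  omega

lemma card_ext (W : Submodule F V) (k s : ℕ) :
    Nat.card {C : Fin k → V // finrank F (W ⊔ span F (Set.range C) : Submodule F V) =
        finrank F W + s} =
      q ^ (finrank F W * k) *
        (qbinomNat q (finrank F V - finrank F W) s * ∏ t ∈ range s, (q ^ k - q ^ t)) := by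
  obtain ⟨σ, hσ⟩ := (W.mkQ).exists_rightInverse_of_surjective (Submodule.range_mkQ W)
  have hσ' : ∀ x, W.mkQ (σ x) = x := fun x => by
    rw [← LinearMap.comp_apply, hσ, LinearMap.id_apply]
  have hWbot : W.map W.mkQ = ⊥ := by
    rw [eq_bot_iff, Submodule.map_le_iff_le_comap]
    exact (Submodule.ker_mkQ W).ge
  have hcond : ∀ C : Fin k → V,
      (finrank F (W ⊔ span F (Set.range C) : Submodule F V) = finrank F W + s) ↔
        finrank F (span F (Set.range (fun j => W.mkQ (C j)))) = s := by
    intro C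
    have h1 := finrank_of_le_quot (le_sup_left : W ≤ W ⊔ span F (Set.range C))
    have h2 : (W ⊔ span F (Set.range C)).map W.mkQ =
        span F (Set.range fun j => W.mkQ (C j)) := by
      rw [Submodule.map_sup, Submodule.map_span, hWbot, bot_sup_eq]
      congr 1
      have : (fun j => W.mkQ (C j)) = (W.mkQ ∘ C) := rfl
      rw [this, Set.range_comp]
    rw [h1, h2, add_right_inj]
  have hmem : ∀ (C : Fin k → V) (j : Fin k), C j - σ (W.mkQ (C j)) ∈ W := by
    intro C j
    have h0 : W.mkQ (C j - σ (W.mkQ (C j))) = 0 := by rw [map_sub, hσ', sub_self]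
    rwa [Submodule.mkQ_apply, Submodule.Quotient.mk_eq_zero] at h0
  let Ψ : {C : Fin k → V // finrank F (W ⊔ span F (Set.range C) : Submodule F V) =
      finrank F W + s} ≃
      {D : Fin k → V ⧸ W // finrank F (span F (Set.range D)) = s} × (Fin k → W) :=
    { toFun := fun C => (⟨fun j => W.mkQ (C.1 j), (hcond C.1).mp C.2⟩,
        fun j => ⟨C.1 j - σ (W.mkQ (C.1 j)), hmem C.1 j⟩)
      invFun := fun p => ⟨fun j => σ (p.1.1 j) + (p.2 j : V), by
        apply (hcond _).mpr
        have hD : (fun j => W.mkQ (σ (p.1.1 j) + (p.2 j : V))) = p.1.1 := funext fun j => by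
          have hz : W.mkQ ((p.2 j : V)) = 0 := by
            rw [Submodule.mkQ_apply]
            exact (Submodule.Quotient.mk_eq_zero W).mpr (p.2 j).2
          rw [map_add, hσ', hz, add_zero]
        rw [hD]
        exact p.1.2⟩
      left_inv := fun C => Subtype.ext (funext fun j => by simp)
      right_inv := fun p => by
        have hD : ∀ j, W.mkQ (σ (p.1.1 j) + (p.2 j : V)) = p.1.1 j := fun j => by
          have hz : W.mkQ ((p.2 j : V)) = 0 := by
            rw [Submodule.mkQ_apply]
            exact (Submodule.Quotient.mk_eq_zero W).mpr (p.2 j).2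
          rw [map_add, hσ', hz, add_zero]
        refine Prod.ext (Subtype.ext (funext fun j => hD j)) (funext fun j => Subtype.ext ?_)
        show σ (p.1.1 j) + (p.2 j : V) - σ (W.mkQ (σ (p.1.1 j) + (p.2 j : V))) = (p.2 j : V)
        rw [hD j, add_sub_cancel_left] }
  have hQfin : finrank F (V ⧸ W) = finrank F V - finrank F W := by
    have := Submodule.finrank_quotient_add_finrank W
    omega
  haveI : Finite (V ⧸ W) := Finite.of_surjective _ (Submodule.mkQ_surjective W)
  rw [Nat.card_congr Ψ, Nat.card_prod, card_tuple_rank, hQfin]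
  have hcW : Nat.card (Fin k → W) = q ^ (finrank F W * k) := by
    haveI : Fintype W := Fintype.ofFinite _
    rw [Nat.card_pi]
    simp only [Nat.card_eq_fintype_card]
    rw [Finset.prod_const, card_eq_pow_finrank (K := F) (V := W), Finset.card_univ,
      Fintype.card_fin, ← pow_mul]
  rw [hcW]
  ring

end counting




section split

variable {α : Type*}

/-- Split a tuple of length `n1` into the first `n2` entries and the rest. -/
def finSplitEquiv (n2 n1 : ℕ) (h : n2 ≤ n1) :
    (Fin n1 → α) ≃ (Fin n2 → α) × (Fin (n1 - n2) → α) where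
  toFun A := (fun j => A (Fin.castLE h j), fun j => A ⟨n2 + j, by omega⟩)
  invFun p := fun x => if hx : (x : ℕ) < n2 then p.1 ⟨x, hx⟩ else p.2 ⟨x - n2, by omega⟩
  left_inv A := by
    funext x
    by_cases hx : (x : ℕ) < n2
    · simp only [hx, dif_pos]
      exact congrArg A (Fin.ext rfl)
    · simp only [hx, dif_neg, not_false_iff]
      exact congrArg A (Fin.ext (by simp; omega))
  right_inv p := by
    refine Prod.ext (funext fun j => ?_) (funext fun j => ?_)
    · have hj : ((Fin.castLE h j : Fin n1) : ℕ) < n2 := j.2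
      simp only [hj, dif_pos]
      exact congrArg p.1 (Fin.ext rfl)
    · have hj : ¬ (((⟨n2 + j, by omega⟩ : Fin n1)) : ℕ) < n2 := by simp
      simp only [hj, dif_neg, not_false_iff]
      exact congrArg p.2 (Fin.ext (by simp))

lemma finSplit_image {n2 n1 : ℕ} (h : n2 ≤ n1) (A : Fin n1 → α) {d : ℕ} (hd : d ≤ n2) :
    A '' {x : Fin n1 | (x : ℕ) < d} =
      (fun j : Fin n2 => A (Fin.castLE h j)) '' {x : Fin n2 | (x : ℕ) < d} := by
  ext y
  constructor
  · rintro ⟨x, hx, rfl⟩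
    simp only [Set.mem_setOf_eq] at hx
    exact ⟨⟨x, by omega⟩, hx, congrArg A (Fin.ext rfl)⟩
  · rintro ⟨x, hx, rfl⟩
    exact ⟨Fin.castLE h x, hx, rfl⟩

lemma finSplit_range {n2 n1 : ℕ} (h : n2 ≤ n1) (A : Fin n1 → α) :
    Set.range A = Set.range (fun j : Fin n2 => A (Fin.castLE h j)) ∪
      Set.range (fun j : Fin (n1 - n2) => A ⟨n2 + j, by omega⟩) := by
  ext y
  constructor
  · rintro ⟨x, rfl⟩
    by_cases hx : (x : ℕ) < n2
    · exact Or.inl ⟨⟨x, hx⟩, congrArg A (Fin.ext rfl)⟩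
    · exact Or.inr ⟨⟨x - n2, by omega⟩, congrArg A (Fin.ext (by simp; omega))⟩
  · rintro (⟨j, rfl⟩ | ⟨j, rfl⟩)
    · exact ⟨Fin.castLE h j, rfl⟩
    · exact ⟨⟨n2 + j, by omega⟩, rfl⟩

lemma image_lt_eq_range {c : ℕ} (A : Fin c → α) :
    A '' {x : Fin c | (x : ℕ) < c} = Set.range A := by
  rw [show {x : Fin c | (x : ℕ) < c} = Set.univ from Set.eq_univ_of_forall fun x => x.2,
    Set.image_univ]

lemma range_castLE_comp {n c : ℕ} (h : c ≤ n) (A : Fin n → α) :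
    Set.range (fun j : Fin c => A (Fin.castLE h j)) = A '' {x : Fin n | (x : ℕ) < c} := by
  ext y
  constructor
  · rintro ⟨j, rfl⟩
    exact ⟨Fin.castLE h j, j.2, rfl⟩
  · rintro ⟨x, hx, rfl⟩
    exact ⟨⟨x, hx⟩, congrArg A (Fin.ext rfl)⟩

lemma antitone_of_step {ℓ : ℕ} (nn : ℕ → ℕ) (hmono : ∀ i, 1 ≤ i → i < ℓ → nn (i + 1) ≤ nn i) :
    ∀ a b, 1 ≤ a → a ≤ b → b ≤ ℓ → nn b ≤ nn a := by
  intro a b h1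
  induction b with
  | zero => intro hab _; exact absurd hab (by omega)
  | succ b ih =>
    intro hab hbl
    rcases eq_or_lt_of_le hab with heq | hlt
    · exact heq ▸ le_refl _
    · exact le_trans (hmono b (by omega) (by omega)) (ih (by omega) (by omega))

end split
section mainaux

variable {F : Type*} [Field F] [Fintype F]

local notation "q" => Fintype.card F

lemma prod_Icc_shift (f : ℕ → ℕ) (ℓ : ℕ) :
    ∏ j ∈ Finset.Icc 1 (ℓ + 1), f j = f 1 * ∏ j ∈ Finset.Icc 1 ℓ, f (j + 1) := by
  rw [← Finset.Ico_add_one_right_eq_Icc, ← Finset.Ico_add_one_right_eq_Icc, Finset.prod_Ico_eq_prod_range,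
    Finset.prod_Ico_eq_prod_range]
  have h1 : ℓ + 1 + 1 - 1 = ℓ + 1 := rfl
  have h2 : ℓ + 1 - 1 = ℓ := rfl
  rw [h1, h2, Finset.prod_range_succ', mul_comm]
  congr 1

lemma main_aux (m : ℕ) (ℓ : ℕ) (hℓ : 1 ≤ ℓ) : ∀ nn rr : ℕ → ℕ,
    (∀ i, 1 ≤ i → i < ℓ → nn (i + 1) ≤ nn i) → nn (ℓ + 1) = 0 →
    (∀ i, 1 ≤ i → i ≤ ℓ → rr (i + 1) ≤ rr i) → rr (ℓ + 1) = 0 →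
    Nat.card {A : Fin (nn 1) → (Fin m → F) //
        ∀ i, 1 ≤ i → i ≤ ℓ →
          finrank F (span F (A '' {x : Fin (nn 1) | (x : ℕ) < nn i})) = rr i} =
      ∏ j ∈ Finset.Icc 1 ℓ,
        q ^ (rr (j + 1) * (nn j - nn (j + 1))) *
          qbinomNat q (m - rr (j + 1)) (rr j - rr (j + 1)) *
          ∏ t ∈ Finset.range (rr j - rr (j + 1)), (q ^ (nn j - nn (j + 1)) - q ^ t) := by
  induction ℓ, hℓ using Nat.le_induction with
  | base =>
    intro nn rr hmono hnnend hrmono hrend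
    have e : {A : Fin (nn 1) → (Fin m → F) //
        ∀ i, 1 ≤ i → i ≤ 1 →
          finrank F (span F (A '' {x : Fin (nn 1) | (x : ℕ) < nn i})) = rr i} ≃
        {A : Fin (nn 1) → (Fin m → F) // finrank F (span F (Set.range A)) = rr 1} := by
      refine Equiv.subtypeEquivRight fun A => ?_
      constructor
      · intro h
        have := h 1 le_rfl le_rfl
        rwa [image_lt_eq_range] at this
      · intro h i h1 h2
        have : i = 1 := by omega
        subst this
        rwa [image_lt_eq_range]
    rw [Nat.card_congr e, card_tuple_rank (nn 1) (rr 1)]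
    rw [Finset.Icc_self, Finset.prod_singleton, hrend, hnnend]
    simp [Module.finrank_fintype_fun_eq_card]
  | succ ℓ hℓ ih =>
    intro nn rr hmono hnnend hrmono hrend
    have h21 : nn 2 ≤ nn 1 := hmono 1 le_rfl (by omega)
    set P : (Fin (nn 2) → (Fin m → F)) → Prop := fun B =>
      ∀ i, 1 ≤ i → i ≤ ℓ →
        finrank F (span F (B '' {x : Fin (nn 2) | (x : ℕ) < nn (i + 1)})) = rr (i + 1) with hP
    set Q : (Fin (nn 2) → (Fin m → F)) → (Fin (nn 1 - nn 2) → (Fin m → F)) → Prop := fun B C =>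
      finrank F ((span F (Set.range B) ⊔ span F (Set.range C) : Submodule F (Fin m → F))) = rr 1
      with hQdef
    have hiff : ∀ A : Fin (nn 1) → (Fin m → F),
        (∀ i, 1 ≤ i → i ≤ ℓ + 1 →
          finrank F (span F (A '' {x : Fin (nn 1) | (x : ℕ) < nn i})) = rr i) ↔
        (P ((finSplitEquiv (nn 2) (nn 1) h21) A).1 ∧
          Q ((finSplitEquiv (nn 2) (nn 1) h21) A).1 ((finSplitEquiv (nn 2) (nn 1) h21) A).2) := by
      intro A
      have hrange : span F (Set.range A) =
          (span F (Set.range ((finSplitEquiv (nn 2) (nn 1) h21) A).1) ⊔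
            span F (Set.range ((finSplitEquiv (nn 2) (nn 1) h21) A).2) :
              Submodule F (Fin m → F)) := by
        rw [finSplit_range h21 A, Submodule.span_union]
        rfl
      constructor
      · intro h
        refine ⟨fun i h1 h2 => ?_, ?_⟩
        · have hlei : nn (i + 1) ≤ nn 2 :=
            antitone_of_step nn hmono 2 (i + 1) (by omega) (by omega) (by omega)
          have := h (i + 1) (by omega) (by omega)
          rwa [finSplit_image h21 A hlei] at this
        · have := h 1 le_rfl (by omega)
          rw [image_lt_eq_range] at this
          show finrank F ((span F (Set.range ((finSplitEquiv (nn 2) (nn 1) h21) A).1) ⊔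
            span F (Set.range ((finSplitEquiv (nn 2) (nn 1) h21) A).2) :
              Submodule F (Fin m → F))) = rr 1
          rw [← hrange]
          exact this
      · rintro ⟨hPA, hQA⟩ i h1 h2
        rcases eq_or_lt_of_le h1 with heq | hgt
        · have : i = 1 := heq.symm
          subst this
          rw [image_lt_eq_range, hrange]
          exact hQA
        · have := hPA (i - 1) (by omega) (by omega)
          have hi : i - 1 + 1 = i := by omega
          rw [hi] at this
          have hlei : nn i ≤ nn 2 :=
            antitone_of_step nn hmono 2 i (by omega) (by omega) (by omega)
          have hfst : ((finSplitEquiv (nn 2) (nn 1) h21) A).1 =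
              fun j => A (Fin.castLE h21 j) := rfl
          rw [hfst] at this
          rwa [← finSplit_image h21 A hlei] at this
    have eqv : {A : Fin (nn 1) → (Fin m → F) // ∀ i, 1 ≤ i → i ≤ ℓ + 1 →
        finrank F (span F (A '' {x : Fin (nn 1) | (x : ℕ) < nn i})) = rr i} ≃
        {pr : (Fin (nn 2) → (Fin m → F)) × (Fin (nn 1 - nn 2) → (Fin m → F)) //
          P pr.1 ∧ Q pr.1 pr.2} :=
      Equiv.subtypeEquiv (finSplitEquiv (nn 2) (nn 1) h21) hiff
    rw [Nat.card_congr eqv]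
    have hE : ∀ B, P B → Nat.card {C // Q B C} =
        q ^ (rr 2 * (nn 1 - nn 2)) * (qbinomNat q (m - rr 2) (rr 1 - rr 2) *
          ∏ t ∈ Finset.range (rr 1 - rr 2), (q ^ (nn 1 - nn 2) - q ^ t)) := by
      intro B hBP
      have hW : finrank F (span F (Set.range B)) = rr 2 := by
        have := hBP 1 le_rfl hℓ
        simp only [Nat.reduceAdd] at this
        rwa [image_lt_eq_range] at this
      have hext := card_ext (V := Fin m → F) (span F (Set.range B)) (nn 1 - nn 2) (rr 1 - rr 2)
      rw [hW] at hext
      have hr21 : rr 2 ≤ rr 1 := hrmono 1 (by omega) (by omega)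
      rw [show rr 2 + (rr 1 - rr 2) = rr 1 from by omega] at hext
      rw [show finrank F (Fin m → F) = m from by
        simp [Module.finrank_fintype_fun_eq_card]] at hext
      exact hext
    rw [natCard_prod_subtype P Q _ hE]
    have hB : Nat.card {B : Fin (nn 2) → (Fin m → F) // P B} =
        ∏ j ∈ Finset.Icc 1 ℓ,
          q ^ (rr (j + 1 + 1) * (nn (j + 1) - nn (j + 1 + 1))) *
            qbinomNat q (m - rr (j + 1 + 1)) (rr (j + 1) - rr (j + 1 + 1)) *
            ∏ t ∈ Finset.range (rr (j + 1) - rr (j + 1 + 1)),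
              (q ^ (nn (j + 1) - nn (j + 1 + 1)) - q ^ t) :=
      ih (fun i => nn (i + 1)) (fun i => rr (i + 1))
        (fun i hi1 hi2 => hmono (i + 1) (by omega) (by omega)) hnnend
        (fun i hi1 hi2 => hrmono (i + 1) (by omega) (by omega)) hrend
    rw [hB, prod_Icc_shift, mul_comm]
    congr 1
    simp only [Nat.reduceAdd, mul_assoc]

end mainaux
section rows

variable {F : Type*} [Field F] [Fintype F]

lemma finrank_span_rows_eq_rank {a b : ℕ} (M : Matrix (Fin a) (Fin b) F) :
    finrank F (span F (Set.range (fun i => M i))) = M.rank := by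
  have h := Matrix.rank_eq_finrank_span_cols (Matrix.transpose M)
  rw [Matrix.rank_transpose] at h
  exact h.symm

end rows

/-- The number of `n × m` matrices over `F_q` whose top `nn i` rows have rank `rr i`
for `1 ≤ i ≤ ℓ`, given a rank profile compatible with the row-count profile, equals
`∏_{j=1}^{ℓ} q^{rr(j+1)(nn j - nn(j+1))} GaussBinom(m - rr(j+1), rr j - rr(j+1), q)
  ⋅ C^{rr j - rr(j+1)}_{nn j - nn(j+1)}` where `C^r_l = ∏_{t<r} (q^l - q^t)`. -/
theorem stmt_10 (q : ℕ) (hq : IsPrimePow q)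
    (F : Type*) [Field F] [Fintype F] (hF : Fintype.card F = q)
    (n m ℓ : ℕ) (hn : 1 ≤ n) (hℓ : 1 ≤ ℓ)
    (nn rr : ℕ → ℕ)
    (hnn1 : nn 1 = n)
    (hnnmono : ∀ i, 1 ≤ i → i < ℓ → nn (i + 1) ≤ nn i)
    (hnnpos : ∀ i, 1 ≤ i → i ≤ ℓ → 0 < nn i)
    (hnnend : nn (ℓ + 1) = 0)
    (hr0 : rr 0 = m)
    (hrmono : ∀ i, i ≤ ℓ → rr (i + 1) ≤ rr i)
    (hrend : rr (ℓ + 1) = 0)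
    (hstep : ∀ i, 1 ≤ i → i ≤ ℓ → rr i - rr (i + 1) ≤ nn i - nn (i + 1))
    (hle : ∀ i, 1 ≤ i → i ≤ ℓ → nn i ≤ n) :
    Nat.card {A : Matrix (Fin n) (Fin m) F //
        ∀ i, ∀ h1 : 1 ≤ i, ∀ h2 : i ≤ ℓ, (A.submatrix (Fin.castLE (hle i h1 h2)) id).rank = rr i} =
      ∏ j ∈ Finset.Icc 1 ℓ,
        q ^ (rr (j + 1) * (nn j - nn (j + 1))) *
          qbinomNat q (m - rr (j + 1)) (rr j - rr (j + 1)) *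
          ∏ t ∈ Finset.range (rr j - rr (j + 1)), (q ^ (nn j - nn (j + 1)) - q ^ t) := by
  subst hF
  subst hnn1
  have hiff : ∀ A : Matrix (Fin (nn 1)) (Fin m) F,
      (∀ i, ∀ h1 : 1 ≤ i, ∀ h2 : i ≤ ℓ,
        (A.submatrix (Fin.castLE (hle i h1 h2)) id).rank = rr i) ↔
      (∀ i, 1 ≤ i → i ≤ ℓ →
        finrank F (span F (A '' {x : Fin (nn 1) | (x : ℕ) < nn i})) = rr i) := by
    intro A
    have key : ∀ i (h1 : 1 ≤ i) (h2 : i ≤ ℓ),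
        (A.submatrix (Fin.castLE (hle i h1 h2)) id).rank =
          finrank F (span F (A '' {x : Fin (nn 1) | (x : ℕ) < nn i})) := by
      intro i h1 h2
      have hset : Set.range (fun r : Fin (nn i) => A (Fin.castLE (hle i h1 h2) r)) =
          A '' {x : Fin (nn 1) | (x : ℕ) < nn i} := range_castLE_comp _ A
      calc (A.submatrix (Fin.castLE (hle i h1 h2)) id).rank
          = finrank F (span F (Set.range
              (fun r : Fin (nn i) => A (Fin.castLE (hle i h1 h2) r)))) :=
            (finrank_span_rows_eq_rank (A.submatrix (Fin.castLE (hle i h1 h2)) id)).symm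
        _ = finrank F (span F (A '' {x : Fin (nn 1) | (x : ℕ) < nn i})) := by rw [hset]
    constructor
    · intro h i h1 h2
      rw [← key i h1 h2]
      exact h i h1 h2
    · intro h i h1 h2
      rw [key i h1 h2]
      exact h i h1 h2
  rw [Nat.card_congr (Equiv.subtypeEquivRight hiff)]
  exact main_aux m ℓ hℓ nn rr hnnmono hnnend (fun i _ h2 => hrmono i h2) hrend
end

section
/- Let h ∈ H_n be a Hessenberg function and let P_h be the poset on [n] with i ≺_h j iff h(i) < j. If μ ⊴ λ_{P_h} is a partition of n (where λ_{P_h} is the Greene–Kleitman shape of P_h), then [n] can be partitioned into ℓ(μ) chains of P_h whose cardinalities are exactly the parts μ_1, ..., μ_{ℓ(μ)} of μ. -/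
open Finset

namespace Stmt12Aux

variable (H : ℕ → ℕ)

/-- A "chain" for the step function `H` with all elements `≥ t`. -/
def IsChn (t : ℕ) (C : Finset ℕ) : Prop :=
  (∀ a ∈ C, t ≤ a) ∧ ∀ a ∈ C, ∀ b ∈ C, a < b → H a < b

instance (t : ℕ) (C : Finset ℕ) : Decidable (IsChn H t C) := by
  unfold IsChn; infer_instance

/-- Length of a maximum `H`-chain inside `U` with all elements `≥ t`. -/
def gl (U : Finset ℕ) (t : ℕ) : ℕ :=
  (U.powerset.filter (fun C => IsChn H t C)).sup Finset.card

lemma isChn_empty (t : ℕ) : IsChn H t ∅ :=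
  ⟨fun a ha => absurd ha (notMem_empty a), fun a ha => absurd ha (notMem_empty a)⟩

lemma le_gl {U C : Finset ℕ} {t : ℕ} (hCU : C ⊆ U) (hC : IsChn H t C) :
    C.card ≤ gl H U t :=
  Finset.le_sup (by simp only [mem_filter, mem_powerset]; exact ⟨hCU, hC⟩)

lemma gl_exists (U : Finset ℕ) (t : ℕ) :
    ∃ C, C ⊆ U ∧ IsChn H t C ∧ C.card = gl H U t := by
  obtain ⟨C, hmem, heq⟩ := Finset.exists_mem_eq_sup
    (U.powerset.filter (fun C => IsChn H t C))
    ⟨∅, by simp only [mem_filter, mem_powerset]; exact ⟨empty_subset _, isChn_empty H t⟩⟩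
    Finset.card
  rw [mem_filter, mem_powerset] at hmem
  exact ⟨C, hmem.1, hmem.2, heq.symm⟩

lemma gl_mono_t {U : Finset ℕ} {t t' : ℕ} (h : t ≤ t') : gl H U t' ≤ gl H U t := by
  obtain ⟨C, hCU, hC, hcard⟩ := gl_exists H U t'
  rw [← hcard]
  exact le_gl H hCU ⟨fun a ha => le_trans h (hC.1 a ha), hC.2⟩

lemma gl_mono_U {U V : Finset ℕ} {t : ℕ} (h : U ⊆ V) : gl H U t ≤ gl H V t := by
  obtain ⟨C, hCU, hC, hcard⟩ := gl_exists H U t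
  rw [← hcard]; exact le_gl H (hCU.trans h) hC

lemma gl_congr_t {U : Finset ℕ} {t t' : ℕ} (htt' : t ≤ t') (h : ∀ a ∈ U, t' ≤ a) :
    gl H U t = gl H U t' := by
  refine le_antisymm ?_ (gl_mono_t H htt')
  obtain ⟨C, hCU, hC, hcard⟩ := gl_exists H U t
  rw [← hcard]
  exact le_gl H hCU ⟨fun a ha => h a (hCU ha), hC.2⟩

lemma gl_drop (Hmono : Monotone H) {U : Finset ℕ} {x t : ℕ} (hU : ∀ a ∈ U, x < a) :
    gl H U t ≤ gl H U (H x + 1) + 1 := by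
  obtain ⟨C, hCU, hC, hcard⟩ := gl_exists H U t
  rw [← hcard]
  rcases C.eq_empty_or_nonempty with rfl | hne
  · simp
  · set m := C.min' hne with hm
    have hmC : m ∈ C := C.min'_mem hne
    have herase : (C.erase m) ⊆ U := fun a ha => hCU (mem_of_mem_erase ha)
    have hchainE : IsChn H (H x + 1) (C.erase m) := by
      constructor
      · intro a ha
        have haC := mem_of_mem_erase ha
        have hma : m < a := lt_of_le_of_ne (C.min'_le a haC) (Ne.symm (ne_of_mem_erase ha))
        have h1 : H m < a := hC.2 m hmC a haC hma
        have h2 : H x ≤ H m := Hmono (le_of_lt (hU m (hCU hmC)))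
        omega
      · intro a ha b hb hab
        exact hC.2 a (mem_of_mem_erase ha) b (mem_of_mem_erase hb) hab
    have h3 := le_gl H herase hchainE
    have h4 : (C.erase m).card = C.card - 1 := card_erase_of_mem hmC
    have h5 : 0 < C.card := card_pos.2 ⟨m, hmC⟩
    omega

lemma gl_insert (Hmono : Monotone H) (Hge : ∀ y, y ≤ H y) {U : Finset ℕ} {x t : ℕ}
    (hU : ∀ a ∈ U, x < a) (ht : t ≤ x) :
    gl H (insert x U) t = gl H U (H x + 1) + 1 := by
  refine le_antisymm ?_ ?_
  · obtain ⟨C, hCU, hC, hcard⟩ := gl_exists H (insert x U) t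
    rw [← hcard]
    by_cases hxC : x ∈ C
    · have herase : C.erase x ⊆ U := by
        intro a ha
        rcases mem_insert.1 (hCU (mem_of_mem_erase ha)) with h1 | h1
        · exact absurd h1 (ne_of_mem_erase ha)
        · exact h1
      have hch : IsChn H (H x + 1) (C.erase x) := by
        constructor
        · intro a ha
          have hxa : x < a := hU a (herase ha)
          have := hC.2 x hxC a (mem_of_mem_erase ha) hxa
          omega
        · intro a ha b hb hab
          exact hC.2 a (mem_of_mem_erase ha) b (mem_of_mem_erase hb) hab
      have h1 := le_gl H herase hch
      have h2 := card_erase_of_mem hxC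
      have h3 : 0 < C.card := card_pos.2 ⟨x, hxC⟩
      omega
    · have hCU' : C ⊆ U := by
        intro a ha
        rcases mem_insert.1 (hCU ha) with h1 | h1
        · exact absurd (h1 ▸ ha) hxC
        · exact h1
      calc C.card ≤ gl H U t := le_gl H hCU' hC
        _ ≤ gl H U (H x + 1) + 1 := gl_drop H Hmono hU
  · obtain ⟨C, hCU, hC, hcard⟩ := gl_exists H U (H x + 1)
    have hxC : x ∉ C := fun hx => by
      have h1 := hC.1 x hx
      have h2 := Hge x
      omega
    have hsub : insert x C ⊆ insert x U := insert_subset_insert x hCU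
    have hch : IsChn H t (insert x C) := by
      constructor
      · intro a ha
        rcases mem_insert.1 ha with heq | haC
        · omega
        · have h1 := hC.1 a haC; have h2 := Hge x; omega
      · intro a ha b hb hab
        rcases mem_insert.1 ha with heq | haC
        · rcases mem_insert.1 hb with heq2 | hbC
          · omega
          · have h1 := hC.1 b hbC; have h2 := Hge x
            have h3 : H a = H x := by rw [heq]
            omega
        · rcases mem_insert.1 hb with heq2 | hbC
          · have h1 := hC.1 a haC; have h2 := Hge x; omega
          · exact hC.2 a haC b hbC hab
    have h1 := le_gl H hsub hch
    rw [card_insert_of_notMem hxC] at h1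
    omega

lemma gl_insert_high {U : Finset ℕ} {x r : ℕ} (hxr : x < r) :
    gl H (insert x U) r = gl H U r := by
  refine le_antisymm ?_ (gl_mono_U H (subset_insert x U))
  obtain ⟨C, hCU, hC, hcard⟩ := gl_exists H (insert x U) r
  rw [← hcard]
  have hxC : x ∉ C := fun hx => by have := hC.1 x hx; omega
  refine le_gl H ?_ hC
  intro a ha
  rcases mem_insert.1 (hCU ha) with h1 | h1
  · exact absurd (h1 ▸ ha) hxC
  · exact h1

lemma one_le_gl_single {x t : ℕ} (h : t ≤ x) : 1 ≤ gl H {x} t := by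
  have h1 : IsChn H t {x} := by
    constructor
    · intro a ha; rw [mem_singleton] at ha; omega
    · intro a ha b hb hab
      rw [mem_singleton] at ha hb; omega
  have := le_gl H (Finset.Subset.refl {x}) h1
  simpa using this

lemma gl_single_eq_zero {x t : ℕ} (h : x < t) : gl H {x} t = 0 := by
  obtain ⟨C, hCU, hC, hcard⟩ := gl_exists H {x} t
  rw [← hcard]
  rcases C.eq_empty_or_nonempty with rfl | ⟨a, ha⟩
  · simp
  · have h1 := hC.1 a ha
    have h2 : a = x := by have := hCU ha; simpa using this
    omega

/-- The invariant: every subset of `[x, n)` can be absorbed by the machines. -/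
def INV (n s : ℕ) (rem r : Fin s → ℕ) (x : ℕ) : Prop :=
  ∀ U : Finset ℕ, (∀ a ∈ U, x ≤ a ∧ a < n) →
    U.card ≤ ∑ i : Fin s, min (rem i) (gl H U (max x (r i)))

/-- The key preservation lemma: greedy "most remaining" assignment keeps the invariant. -/
lemma step (Hmono : Monotone H) (Hge : ∀ y, y ≤ H y) {n s : ℕ} {rem r : Fin s → ℕ}
    {x : ℕ} (hxn : x < n) (hinv : INV H n s rem r x) (i0 : Fin s)
    (hr0 : r i0 ≤ x) (hrem0 : 0 < rem i0)
    (hmax : ∀ i, r i ≤ x → rem i ≤ rem i0) :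
    INV H n s (Function.update rem i0 (rem i0 - 1))
      (Function.update r i0 (H x + 1)) (x + 1) := by
  intro U hUmem
  have hUx : ∀ a ∈ U, x < a := fun a ha => (hUmem a ha).1
  have hxU : x ∉ U := fun hx => lt_irrefl x (hUx x hx)
  have hHgex := Hge x
  set g0 := gl H U (x + 1) with hg0
  set gp := gl H U (H x + 1) with hgp
  have hg1 : gp ≤ g0 := gl_mono_t H (by omega)
  have hg2 : g0 ≤ gp + 1 := gl_drop H Hmono hUx
  have hglx : gl H U x = g0 := gl_congr_t H (Nat.le_succ x) (fun a ha => hUx a ha)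
  -- new terms
  set N : Fin s → ℕ := fun i => min (Function.update rem i0 (rem i0 - 1) i)
      (gl H U (max (x+1) (Function.update r i0 (H x + 1) i))) with hNdef
  have hNi0 : N i0 = min (rem i0 - 1) gp := by
    show min (Function.update rem i0 (rem i0 - 1) i0)
      (gl H U (max (x+1) (Function.update r i0 (H x + 1) i0))) = _
    rw [Function.update_self, Function.update_self, max_eq_right (by omega)]
  have hNav : ∀ i, i ≠ i0 → r i ≤ x → N i = min (rem i) g0 := by
    intro i hi hri
    show min (Function.update rem i0 (rem i0 - 1) i)
      (gl H U (max (x+1) (Function.update r i0 (H x + 1) i))) = _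
    rw [Function.update_of_ne hi, Function.update_of_ne hi, max_eq_left (by omega)]
  have hNbl : ∀ i, i ≠ i0 → ¬ (r i ≤ x) → N i = min (rem i) (gl H U (r i)) := by
    intro i hi hri
    show min (Function.update rem i0 (rem i0 - 1) i)
      (gl H U (max (x+1) (Function.update r i0 (H x + 1) i))) = _
    rw [Function.update_of_ne hi, Function.update_of_ne hi, max_eq_right (by omega)]
  show U.card ≤ ∑ i : Fin s, N i
  by_cases hB : g0 = gp ∧ gp < rem i0
  · -- use the invariant at U itself; sums agree termwise
    have h1 := hinv U (fun a ha => ⟨by have := hUx a ha; omega, (hUmem a ha).2⟩)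
    have hold : ∀ i : Fin s, min (rem i) (gl H U (max x (r i))) = N i := by
      intro i
      by_cases hi : i = i0
      · rw [hi, hNi0, max_eq_left hr0, hglx]
        have h2 := hB.1
        have h3 := hB.2
        omega
      · by_cases hri : r i ≤ x
        · rw [hNav i hi hri, max_eq_left hri, hglx]
        · rw [hNbl i hi hri, max_eq_right (by omega)]
    calc U.card ≤ ∑ i : Fin s, min (rem i) (gl H U (max x (r i))) := h1
      _ = ∑ i : Fin s, N i := Finset.sum_congr rfl (fun i _ => hold i)
  · -- use the invariant at insert x U
    have hcaseA : g0 = gp + 1 ∨ (g0 = gp ∧ rem i0 ≤ gp) := by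
      by_cases hgg : g0 = gp
      · right
        refine ⟨hgg, ?_⟩
        by_contra hcon
        exact hB ⟨hgg, by omega⟩
      · left; omega
    have h1 := hinv (insert x U) (by
      intro a ha
      rcases mem_insert.1 ha with heq | haU
      · exact ⟨le_of_eq heq.symm, heq ▸ hxn⟩
      · exact ⟨by have := hUx a haU; omega, (hUmem a haU).2⟩)
    rw [card_insert_of_notMem hxU] at h1
    set T : Fin s → ℕ := fun i => min (rem i) (gl H (insert x U) (max x (r i))) with hTdef
    have hTi0 : T i0 = min (rem i0) (gp + 1) := by
      show min (rem i0) (gl H (insert x U) (max x (r i0))) = _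
      rw [max_eq_left hr0, gl_insert H Hmono Hge hUx (le_refl x)]
    have hTav : ∀ i, r i ≤ x → T i = min (rem i) (gp + 1) := by
      intro i hri
      show min (rem i) (gl H (insert x U) (max x (r i))) = _
      rw [max_eq_left hri, gl_insert H Hmono Hge hUx (le_refl x)]
    have hTbl : ∀ i, ¬ (r i ≤ x) → T i = min (rem i) (gl H U (r i)) := by
      intro i hri
      show min (rem i) (gl H (insert x U) (max x (r i))) = _
      rw [max_eq_right (by omega), gl_insert_high H (by omega)]
    have hpt : ∀ i : Fin s, T i ≤ N i + (if i = i0 then 1 else 0) := by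
      intro i
      by_cases hi : i = i0
      · rw [hi, hTi0, hNi0, if_pos rfl]
        omega
      · rw [if_neg hi]
        by_cases hri : r i ≤ x
        · rw [hTav i hri, hNav i hi hri]
          rcases hcaseA with hA | ⟨hA1, hA2⟩
          · omega
          · have := hmax i hri
            omega
        · rw [hTbl i hri, hNbl i hi hri]
          omega
    have hsum2 : (∑ i : Fin s, T i) ≤ (∑ i : Fin s, N i) + 1 := by
      calc (∑ i : Fin s, T i) ≤ ∑ i : Fin s, (N i + (if i = i0 then 1 else 0)) :=
            Finset.sum_le_sum (fun i _ => hpt i)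
        _ = (∑ i : Fin s, N i) + ∑ i : Fin s, (if i = i0 then 1 else 0) :=
            Finset.sum_add_distrib
        _ = (∑ i : Fin s, N i) + 1 := by
            rw [Finset.sum_ite_eq' Finset.univ i0 (fun _ => 1)]
            simp
    have h3 : univ.sum T = ∑ i : Fin s, T i := rfl
    omega

lemma sum_antitone_le (μ : ℕ → ℕ) (hanti : ∀ i j, i ≤ j → μ j ≤ μ i) (F : Finset ℕ) :
    (∑ i ∈ F, μ i) ≤ ∑ i ∈ range F.card, μ i := by
  induction F using Finset.strongInduction with
  | _ F ih =>
    rcases F.eq_empty_or_nonempty with rfl | hne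
    · simp
    · set m := F.max' hne with hm
      have hmF : m ∈ F := F.max'_mem hne
      have hsub : F ⊆ range (m+1) := fun a ha => mem_range.2 (by have := F.le_max' a ha; omega)
      have hcard : F.card ≤ m + 1 := by simpa using card_le_card hsub
      obtain ⟨c', hc'⟩ : ∃ c', F.card = c' + 1 := ⟨F.card - 1, by have := card_pos.2 hne; omega⟩
      have herase := ih (F.erase m) (erase_ssubset hmF)
      have h2 : (F.erase m).card = c' := by rw [card_erase_of_mem hmF, hc']; omega
      have h1 : (∑ i ∈ F, μ i) = μ m + ∑ i ∈ F.erase m, μ i := (Finset.add_sum_erase F μ hmF).symm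
      have h3 : (∑ i ∈ range F.card, μ i) = (∑ i ∈ range c', μ i) + μ c' := by
        rw [hc', Finset.sum_range_succ]
      have h4 : μ m ≤ μ c' := hanti c' m (by omega)
      rw [h2] at herase
      omega

lemma initial {n s : ℕ} (h : Fin n → Fin n) (hge : ∀ i, i ≤ h i)
    (Hval : ∀ a : Fin n, H (a : ℕ) = ((h a : Fin n) : ℕ))
    (μ : ℕ → ℕ) (hanti : ∀ i j, i ≤ j → μ j ≤ μ i)
    (hsum : ∑ i ∈ Finset.range s, μ i = n)
    (hdom : ∀ k, ∑ i ∈ Finset.range k, μ i ≤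
      sSup {N : ℕ | ∃ Cs : Fin k → Finset (Fin n),
        (∀ i, ∀ a ∈ Cs i, ∀ b ∈ Cs i, a ≠ b → h a < b ∨ h b < a) ∧
        N = (Finset.univ.biUnion Cs).card}) :
    INV H n s (fun i => μ (i : ℕ)) (fun _ => 0) 0 := by
  intro U hUmem
  show U.card ≤ ∑ i : Fin s, min (μ (i:ℕ)) (gl H U (max 0 0))
  rw [max_self]
  rw [Fin.sum_univ_eq_sum_range (fun i => min (μ i) (gl H U 0)) s]
  obtain ⟨c, hc⟩ : ∃ c, gl H U 0 = c := ⟨_, rfl⟩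
  rw [hc]
  obtain ⟨k, hk⟩ : ∃ k, ((range s).filter (fun i => c ≤ μ i)).card = k := ⟨_, rfl⟩
  have hmem0 : (0:ℕ) ∈ {N : ℕ | ∃ Cs : Fin k → Finset (Fin n),
      (∀ i, ∀ a ∈ Cs i, ∀ b ∈ Cs i, a ≠ b → h a < b ∨ h b < a) ∧
      N = (Finset.univ.biUnion Cs).card} := by
    refine ⟨fun _ => ∅, fun i a ha => absurd ha (notMem_empty a), ?_⟩
    have he : (Finset.univ.biUnion fun _ : Fin k => (∅ : Finset (Fin n))) = ∅ := by
      ext a; simp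
    rw [he, Finset.card_empty]
  have hbound : ∀ N ∈ {N : ℕ | ∃ Cs : Fin k → Finset (Fin n),
      (∀ i, ∀ a ∈ Cs i, ∀ b ∈ Cs i, a ≠ b → h a < b ∨ h b < a) ∧
      N = (Finset.univ.biUnion Cs).card}, N + U.card ≤ n + k * c := by
    rintro N ⟨Cs, hch, rfl⟩
    set V := (Finset.univ.biUnion Cs).image (fun a : Fin n => (a : ℕ)) with hV
    have hVcard : (Finset.univ.biUnion Cs).card = V.card :=
      (card_image_of_injective _ Fin.val_injective).symm
    have hsubn : V ∪ U ⊆ range n := by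
      intro a ha
      rcases mem_union.1 ha with haV | haU
      · obtain ⟨b, _, rfl⟩ := mem_image.1 haV
        exact mem_range.2 b.isLt
      · exact mem_range.2 (hUmem a haU).2
    have h4 : (V ∪ U).card ≤ n := by simpa using card_le_card hsubn
    have h5 : V ∩ U ⊆ Finset.univ.biUnion
        (fun j : Fin k => ((Cs j).image (fun a : Fin n => (a:ℕ)) ∩ U)) := by
      intro a ha
      obtain ⟨haV, haU⟩ := mem_inter.1 ha
      obtain ⟨b, hbV, rfl⟩ := mem_image.1 haV
      obtain ⟨j, _, hbj⟩ := mem_biUnion.1 hbV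
      exact mem_biUnion.2 ⟨j, mem_univ j, mem_inter.2 ⟨mem_image_of_mem _ hbj, haU⟩⟩
    have h7 : ∀ j : Fin k, ((Cs j).image (fun a : Fin n => (a:ℕ)) ∩ U).card ≤ c := by
      intro j
      rw [← hc]
      refine le_gl H inter_subset_right ⟨fun a _ => Nat.zero_le a, ?_⟩
      intro a ha b hb hab
      obtain ⟨a', ha', rfl⟩ := mem_image.1 (mem_inter.1 ha).1
      obtain ⟨b', hb', rfl⟩ := mem_image.1 (mem_inter.1 hb).1
      have hne : a' ≠ b' := fun he => by rw [he] at hab; exact lt_irrefl _ hab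
      rcases hch j a' ha' b' hb' hne with hlt | hlt
      · have h8 : ((h a') : ℕ) < (b' : ℕ) := hlt
        rw [Hval a']
        exact h8
      · exfalso
        have h8 : ((h b') : ℕ) < (a' : ℕ) := hlt
        have h9 : (b' : ℕ) ≤ ((h b') : ℕ) := hge b'
        omega
    have h6 : (V ∩ U).card ≤ k * c := by
      calc (V ∩ U).card
          ≤ (Finset.univ.biUnion
              (fun j : Fin k => ((Cs j).image (fun a : Fin n => (a:ℕ)) ∩ U))).card :=
            card_le_card h5
        _ ≤ ∑ j : Fin k, ((Cs j).image (fun a : Fin n => (a:ℕ)) ∩ U).card :=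
            card_biUnion_le
        _ ≤ ∑ _j : Fin k, c := Finset.sum_le_sum (fun j _ => h7 j)
        _ = k * c := by rw [Finset.sum_const, card_univ, Fintype.card_fin, smul_eq_mul]
    have h8 := card_union_add_card_inter V U
    omega
  have hsupb : sSup {N : ℕ | ∃ Cs : Fin k → Finset (Fin n),
      (∀ i, ∀ a ∈ Cs i, ∀ b ∈ Cs i, a ≠ b → h a < b ∨ h b < a) ∧
      N = (Finset.univ.biUnion Cs).card} ≤ n + k * c - U.card :=
    csSup_le ⟨0, hmem0⟩ (fun N hN => by have := hbound N hN; omega)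
  have hUn : U.card ≤ n := by
    have hsub : U ⊆ range n := fun a ha => mem_range.2 (hUmem a ha).2
    simpa using card_le_card hsub
  have h2 : (∑ i ∈ range k, μ i) + U.card ≤ n + k * c := by
    have h6 := le_trans (hdom k) hsupb
    have h7 := Nat.add_le_add_right h6 U.card
    rwa [Nat.sub_add_cancel (le_trans hUn (Nat.le_add_right n _))] at h7
  have h3 : (∑ i ∈ (range s).filter (fun i => c ≤ μ i), μ i) ≤ ∑ i ∈ range k, μ i := by
    have := sum_antitone_le μ hanti ((range s).filter (fun i => c ≤ μ i))
    rwa [hk] at this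
  have h4 : (∑ i ∈ (range s).filter (fun i => c ≤ μ i), μ i)
      + (∑ i ∈ (range s).filter (fun i => ¬ c ≤ μ i), μ i) = n := by
    rw [Finset.sum_filter_add_sum_filter_not]; exact hsum
  have h5 : (∑ i ∈ range s, min (μ i) c)
      = k * c + ∑ i ∈ (range s).filter (fun i => ¬ c ≤ μ i), μ i := by
    rw [← Finset.sum_filter_add_sum_filter_not (range s) (fun i => c ≤ μ i)
      (fun i => min (μ i) c)]
    congr 1
    · rw [Finset.sum_congr rfl (fun i hi => min_eq_right (mem_filter.1 hi).2),
        Finset.sum_const, hk, smul_eq_mul]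
    · exact Finset.sum_congr rfl
        (fun i hi => min_eq_left (le_of_lt (lt_of_not_ge (mem_filter.1 hi).2)))
  clear hsupb hbound hmem0 hdom
  omega

lemma recMain (Hmono : Monotone H) (Hge : ∀ y, y ≤ H y) {n s : ℕ} :
    ∀ d x : ℕ, x + d = n → ∀ rem r : Fin s → ℕ, (∑ i, rem i) = d →
      INV H n s rem r x →
      ∃ D : Fin s → Finset ℕ,
        (∀ i, ∀ a ∈ D i, x ≤ a ∧ a < n ∧ r i ≤ a) ∧
        (∀ i j, i ≠ j → ∀ a, a ∈ D i → a ∈ D j → False) ∧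
        (∀ a, x ≤ a → a < n → ∃ i, a ∈ D i) ∧
        (∀ i, (D i).card = rem i) ∧
        (∀ i, ∀ a ∈ D i, ∀ b ∈ D i, a < b → H a < b) := by
  intro d
  induction d with
  | zero =>
    intro x hx rem r hrem _hinv
    refine ⟨fun _ => ∅, by simp, by simp, ?_, ?_, by simp⟩
    · intro a hxa han
      omega
    intro i
    have h0 : rem i = 0 := Finset.sum_eq_zero_iff.1 hrem i (mem_univ i)
    simp [h0]
  | succ d ih =>
    intro x hx rem r hrem hinv
    have hxn : x < n := by omega
    have hone : 1 ≤ ∑ i : Fin s, min (rem i) (gl H {x} (max x (r i))) := by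
      have h1 := hinv {x} (by intro a ha; rw [mem_singleton] at ha; omega)
      simpa using h1
    have hA : ∃ i, r i ≤ x ∧ 0 < rem i := by
      by_contra hno
      push_neg at hno
      have hz : ∀ i ∈ (univ : Finset (Fin s)),
          min (rem i) (gl H {x} (max x (r i))) = 0 := by
        intro i _
        by_cases hri : r i ≤ x
        · have h0 : rem i = 0 := by have := hno i hri; omega
          simp [h0]
        · rw [max_eq_right (by omega), gl_single_eq_zero H (by omega)]
          simp
      rw [Finset.sum_eq_zero hz] at hone; omega
    obtain ⟨i1, hi1⟩ := hA
    set A := univ.filter (fun i : Fin s => r i ≤ x ∧ 0 < rem i) with hAdef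
    have hAne : A.Nonempty := ⟨i1, by simp [hAdef, hi1.1, hi1.2]⟩
    obtain ⟨i0, hi0A, hi0max⟩ := Finset.exists_max_image A rem hAne
    rw [hAdef, mem_filter] at hi0A
    have hr0 : r i0 ≤ x := hi0A.2.1
    have hrem0 : 0 < rem i0 := hi0A.2.2
    have hmax : ∀ i, r i ≤ x → rem i ≤ rem i0 := by
      intro i hri
      by_cases h0 : 0 < rem i
      · exact hi0max i (by simp [hAdef, hri, h0])
      · omega
    have hinv' := step H Hmono Hge hxn hinv i0 hr0 hrem0 hmax
    have hrem' : (∑ i, Function.update rem i0 (rem i0 - 1) i) = d := by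
      rw [Finset.sum_update_of_mem (mem_univ i0), Finset.sdiff_singleton_eq_erase]
      rw [← Finset.add_sum_erase _ rem (mem_univ i0)] at hrem
      omega
    obtain ⟨D, hDmem, hDdisj, hDcov, hDcard, hDch⟩ := ih (x+1) (by omega) _ _ hrem' hinv'
    refine ⟨Function.update D i0 (insert x (D i0)), ?_, ?_, ?_, ?_, ?_⟩
    · intro i a ha
      by_cases hii : i = i0
      · rw [hii] at ha ⊢
        rw [Function.update_self] at ha
        rcases mem_insert.1 ha with heq | haD
        · exact ⟨by omega, by omega, by omega⟩
        · have h5 := hDmem i0 a haD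
          rw [Function.update_self] at h5
          have h6 := Hge x
          exact ⟨by omega, h5.2.1, by omega⟩
      · rw [Function.update_of_ne hii] at ha
        have h5 := hDmem i a ha
        rw [Function.update_of_ne hii] at h5
        exact ⟨by omega, h5.2.1, h5.2.2⟩
    · intro i j hij a hai haj
      by_cases hii : i = i0
      · rw [hii] at hai
        rw [Function.update_self] at hai
        rw [Function.update_of_ne (fun hji => hij (hii.trans hji.symm))] at haj
        rcases mem_insert.1 hai with heq | haD
        · have := (hDmem j a haj).1; omega
        · exact hDdisj i0 j (hii ▸ hij) a haD haj
      · by_cases hjj : j = i0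
        · rw [hjj] at haj
          rw [Function.update_self] at haj
          rw [Function.update_of_ne hii] at hai
          rcases mem_insert.1 haj with heq | haD
          · have := (hDmem i a hai).1; omega
          · exact hDdisj i i0 hii a hai haD
        · rw [Function.update_of_ne hii] at hai
          rw [Function.update_of_ne hjj] at haj
          exact hDdisj i j hij a hai haj
    · intro a hxa han
      rcases Nat.eq_or_lt_of_le hxa with heq | hlt
      · exact ⟨i0, by rw [Function.update_self, ← heq]; exact mem_insert_self _ _⟩
      · obtain ⟨i, hi⟩ := hDcov a (by omega) han
        by_cases hii : i = i0
        · exact ⟨i0, by rw [Function.update_self]; exact mem_insert_of_mem (hii ▸ hi)⟩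
        · exact ⟨i, by rw [Function.update_of_ne hii]; exact hi⟩
    · intro i
      by_cases hii : i = i0
      · rw [hii, Function.update_self]
        have hxD : x ∉ D i0 := fun hx0 => by have := (hDmem i0 x hx0).1; omega
        rw [card_insert_of_notMem hxD]
        have h5 := hDcard i0
        rw [Function.update_self] at h5
        omega
      · rw [Function.update_of_ne hii]
        have h5 := hDcard i
        rw [Function.update_of_ne hii] at h5
        exact h5
    · intro i a ha b hb hab
      by_cases hii : i = i0
      · rw [hii] at ha hb
        rw [Function.update_self] at ha hb
        rcases mem_insert.1 ha with heqa | haD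
        · rcases mem_insert.1 hb with heqb | hbD
          · omega
          · have h5 := (hDmem i0 b hbD).2.2
            rw [Function.update_self] at h5
            have h6 : H a = H x := by rw [heqa]
            omega
        · rcases mem_insert.1 hb with heqb | hbD
          · have h5 := (hDmem i0 a haD).1
            omega
          · exact hDch i0 a haD b hbD hab
      · rw [Function.update_of_ne hii] at ha hb
        exact hDch i a ha b hb hab

end Stmt12Aux

/-- Let `h` be a Hessenberg function on `[n]` and `P_h` the poset with `i ≺_h j ↔ h i < j`.
If `μ` is a partition of `n` dominated by the Greene–Kleitman shape of `P_h` (i.e. the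
partial sums of `μ` are bounded by the maximal cardinalities of unions of `k` chains),
then `[n]` can be partitioned into `ℓ(μ)` chains of `P_h` whose cardinalities are the
parts of `μ`. -/
theorem stmt_12 (n s : ℕ) (h : Fin n → Fin n) (hmono : Monotone h) (hge : ∀ i, i ≤ h i)
    (μ : ℕ → ℕ)
    (hpos : ∀ i < s, 0 < μ i) (hzero : ∀ i, s ≤ i → μ i = 0)
    (hanti : ∀ i j, i ≤ j → μ j ≤ μ i)
    (hsum : ∑ i ∈ Finset.range s, μ i = n)
    (hdom : ∀ k, ∑ i ∈ Finset.range k, μ i ≤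
      sSup {N : ℕ | ∃ Cs : Fin k → Finset (Fin n),
        (∀ i, ∀ a ∈ Cs i, ∀ b ∈ Cs i, a ≠ b → h a < b ∨ h b < a) ∧
        N = (Finset.univ.biUnion Cs).card}) :
    ∃ Cs : Fin s → Finset (Fin n),
      (∀ i j, i ≠ j → Disjoint (Cs i) (Cs j)) ∧
      (∀ i, ∀ a ∈ Cs i, ∀ b ∈ Cs i, a ≠ b → h a < b ∨ h b < a) ∧
      Finset.univ.biUnion Cs = Finset.univ ∧
      (∀ i : Fin s, (Cs i).card = μ (i : ℕ)) := by
  classical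
  set H : ℕ → ℕ := fun x => if hx : x < n then ((h ⟨x, hx⟩ : Fin n) : ℕ) else x with hHdef
  have Hval : ∀ a : Fin n, H (a : ℕ) = ((h a : Fin n) : ℕ) := by
    intro a
    have ha : ((a : ℕ)) < n := a.isLt
    simp only [hHdef, dif_pos ha, Fin.eta]
  have HgeN : ∀ y, y ≤ H y := by
    intro y
    by_cases hy : y < n
    · simp only [hHdef, dif_pos hy]
      exact hge ⟨y, hy⟩
    · simp [hHdef, hy]
  have HmonoN : Monotone H := by
    intro a b hab
    by_cases ha : a < n
    · by_cases hb : b < n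
      · simp only [hHdef, dif_pos ha, dif_pos hb]
        exact hmono (show (⟨a, ha⟩ : Fin n) ≤ ⟨b, hb⟩ from hab)
      · simp only [hHdef, dif_pos ha, dif_neg hb]
        have h1 : ((h ⟨a, ha⟩ : Fin n) : ℕ) < n := (h ⟨a, ha⟩).isLt
        omega
    · have hb : ¬ b < n := by omega
      simp only [hHdef, dif_neg ha, dif_neg hb]
      exact hab
  have hinit := Stmt12Aux.initial H h hge Hval μ hanti hsum hdom
  have hrem0 : (∑ i : Fin s, μ (i:ℕ)) = n := by
    rw [Fin.sum_univ_eq_sum_range (fun i => μ i) s]; exact hsum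
  obtain ⟨D, hDmem, hDdisj, hDcov, hDcard, hDch⟩ :=
    Stmt12Aux.recMain H HmonoN HgeN (n := n) (s := s) n 0 (by omega) _ _ hrem0 hinit
  have hlt : ∀ i : Fin s, ∀ m ∈ D i, m < n := fun i m hm => (hDmem i m hm).2.1
  refine ⟨fun i => (D i).attachFin (hlt i), ?_, ?_, ?_, ?_⟩
  · intro i j hij
    rw [Finset.disjoint_left]
    intro a hai haj
    rw [Finset.mem_attachFin] at hai haj
    exact hDdisj i j hij (a : ℕ) hai haj
  · intro i a ha b hb hab
    rw [Finset.mem_attachFin] at ha hb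
    rcases lt_trichotomy ((a : Fin n) : ℕ) ((b : Fin n) : ℕ) with hl | he | hl
    · left
      have h1 := hDch i _ ha _ hb hl
      rw [Hval a] at h1
      exact h1
    · exact absurd (Fin.ext he) hab
    · right
      have h1 := hDch i _ hb _ ha hl
      rw [Hval b] at h1
      exact h1
  · ext a
    simp only [Finset.mem_biUnion, Finset.mem_univ, iff_true]
    obtain ⟨i, hi⟩ := hDcov (a : ℕ) (Nat.zero_le _) a.isLt
    exact ⟨i, trivial, (Finset.mem_attachFin _).2 hi⟩
  · intro i
    rw [Finset.card_attachFin]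
    exact hDcard i
end

section
/- Let P_h be the poset associated to a Hessenberg function h ∈ H_n, with C_1, C_2 disjoint chains in P_h satisfying |C_1| > |C_2| + 1. Then there exist disjoint chains C_1', C_2' in P_h with C_1 ∪ C_2 = C_1' ∪ C_2', |C_1'| = |C_1| − 1, and |C_2'| = |C_2| + 1. -/
lemma stmt_13_aux (n : ℕ) (h : Fin n → Fin n) (hmono : Monotone h) (hge : ∀ i, i ≤ h i) :
    ∀ q (C₁ C₂ : Finset (Fin n)), C₂.card ≤ q → Disjoint C₁ C₂ →
    (∀ a ∈ C₁, ∀ b ∈ C₁, a ≠ b → h a < b ∨ h b < a) →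
    (∀ a ∈ C₂, ∀ b ∈ C₂, a ≠ b → h a < b ∨ h b < a) →
    C₂.card + 1 < C₁.card →
    ∃ C₁' C₂' : Finset (Fin n), ∃ a : Fin n, Disjoint C₁' C₂' ∧
      (∀ x ∈ C₁', ∀ y ∈ C₁', x ≠ y → h x < y ∨ h y < x) ∧
      (∀ x ∈ C₂', ∀ y ∈ C₂', x ≠ y → h x < y ∨ h y < x) ∧
      C₁' ∪ C₂' = C₁ ∪ C₂ ∧
      C₁'.card = C₁.card - 1 ∧ C₂'.card = C₂.card + 1 ∧
      a ∈ C₁ ∧ (∀ x ∈ C₁, a ≤ x) ∧ a ∈ C₂' ∧ (∀ x ∈ C₂', x ≠ a → h a < x) := by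
  intro q
  induction q with
  | zero =>
    intro C₁ C₂ hq hdisj hc₁ hc₂ hcard
    have hC₂ : C₂ = ∅ := Finset.card_eq_zero.mp (Nat.le_zero.mp hq)
    subst hC₂
    have hne : C₁.Nonempty := Finset.card_pos.mp (by omega)
    set a₁ := C₁.min' hne with ha₁
    have ha₁mem : a₁ ∈ C₁ := C₁.min'_mem hne
    refine ⟨C₁.erase a₁, {a₁}, a₁, ?_, ?_, ?_, ?_, ?_, ?_, ha₁mem,
      fun x hx => C₁.min'_le x hx, Finset.mem_singleton_self a₁, ?_⟩
    · simp [Finset.disjoint_singleton_right]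
    · intro x hx y hy hxy
      exact hc₁ x (Finset.mem_of_mem_erase hx) y (Finset.mem_of_mem_erase hy) hxy
    · intro x hx y hy hxy
      simp only [Finset.mem_singleton] at hx hy
      exact absurd (hx.trans hy.symm) hxy
    · rw [Finset.union_comm, Finset.union_empty, ← Finset.insert_eq,
        Finset.insert_erase ha₁mem]
    · simp [Finset.card_erase_of_mem ha₁mem]
    · simp
    · intro x hx hxa
      simp only [Finset.mem_singleton] at hx
      exact absurd hx hxa
  | succ q ih =>
    intro C₁ C₂ hq hdisj hc₁ hc₂ hcard
    have hne : C₁.Nonempty := Finset.card_pos.mp (by omega)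
    set a₁ := C₁.min' hne with ha₁
    have ha₁mem : a₁ ∈ C₁ := C₁.min'_mem hne
    by_cases hA : ∀ b ∈ C₂, h a₁ < b
    · -- move a₁ into C₂
      have ha₁nC₂ : a₁ ∉ C₂ := Finset.disjoint_left.mp hdisj ha₁mem
      refine ⟨C₁.erase a₁, insert a₁ C₂, a₁, ?_, ?_, ?_, ?_, ?_, ?_, ha₁mem,
        fun x hx => C₁.min'_le x hx, Finset.mem_insert_self _ _, ?_⟩
      · rw [Finset.disjoint_left]
        intro x hx hx'
        rcases Finset.mem_insert.mp hx' with rfl | hx'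
        · exact (Finset.mem_erase.mp hx).1 rfl
        · exact Finset.disjoint_left.mp hdisj (Finset.mem_of_mem_erase hx) hx'
      · intro x hx y hy hxy
        exact hc₁ x (Finset.mem_of_mem_erase hx) y (Finset.mem_of_mem_erase hy) hxy
      · intro x hx y hy hxy
        rcases Finset.mem_insert.mp hx with rfl | hx
        · rcases Finset.mem_insert.mp hy with rfl | hy
          · exact absurd rfl hxy
          · exact Or.inl (hA y hy)
        · rcases Finset.mem_insert.mp hy with rfl | hy
          · exact Or.inr (hA x hx)
          · exact hc₂ x hx y hy hxy
      · rw [Finset.union_insert, ← Finset.insert_union, Finset.insert_erase ha₁mem]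
      · simp [Finset.card_erase_of_mem ha₁mem]
      · simp [Finset.card_insert_of_notMem ha₁nC₂]
      · intro x hx hxa
        rcases Finset.mem_insert.mp hx with rfl | hx
        · exact absurd rfl hxa
        · exact hA x hx
    · -- recursive case
      push_neg at hA
      obtain ⟨b, hbC₂, hble⟩ := hA
      have hC₂ne : C₂.Nonempty := ⟨b, hbC₂⟩
      set b₁ := C₂.min' hC₂ne with hb₁
      have hb₁mem : b₁ ∈ C₂ := C₂.min'_mem hC₂ne
      have hb₁le : b₁ ≤ h a₁ := le_trans (C₂.min'_le b hbC₂) hble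
      have ha₁nC₂ : a₁ ∉ C₂ := Finset.disjoint_left.mp hdisj ha₁mem
      have hb₁nC₁ : b₁ ∉ C₁ := Finset.disjoint_right.mp hdisj hb₁mem
      have hC₂card : 1 ≤ C₂.card := Finset.card_pos.mpr hC₂ne
      -- the sub-chains
      have hsubdisj : Disjoint (C₁.erase a₁) (C₂.erase b₁) :=
        Finset.disjoint_of_subset_left (Finset.erase_subset _ _)
          (Finset.disjoint_of_subset_right (Finset.erase_subset _ _) hdisj)
      have hsubc₁ : ∀ x ∈ C₁.erase a₁, ∀ y ∈ C₁.erase a₁, x ≠ y → h x < y ∨ h y < x :=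
        fun x hx y hy hxy => hc₁ x (Finset.mem_of_mem_erase hx) y (Finset.mem_of_mem_erase hy) hxy
      have hsubc₂ : ∀ x ∈ C₂.erase b₁, ∀ y ∈ C₂.erase b₁, x ≠ y → h x < y ∨ h y < x :=
        fun x hx y hy hxy => hc₂ x (Finset.mem_of_mem_erase hx) y (Finset.mem_of_mem_erase hy) hxy
      have hcard₁ : (C₁.erase a₁).card = C₁.card - 1 := Finset.card_erase_of_mem ha₁mem
      have hcard₂ : (C₂.erase b₁).card = C₂.card - 1 := Finset.card_erase_of_mem hb₁mem
      obtain ⟨D₁, D₂, a₂, hDdisj, hD₁c, hD₂c, hDun, hD₁card, hD₂card, ha₂subC₁,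
        ha₂min, ha₂D₂, ha₂lt⟩ :=
        ih (C₁.erase a₁) (C₂.erase b₁) (by omega) hsubdisj hsubc₁ hsubc₂ (by omega)
      have ha₂C₁ : a₂ ∈ C₁ := Finset.mem_of_mem_erase ha₂subC₁
      have ha₂ne : a₂ ≠ a₁ := (Finset.mem_erase.mp ha₂subC₁).1
      -- key facts
      have f2 : h a₁ < a₂ := by
        rcases hc₁ a₁ ha₁mem a₂ ha₂C₁ (Ne.symm ha₂ne) with hlt | hlt
        · exact hlt
        · exact absurd (lt_of_le_of_lt (hge a₂) hlt) (not_lt.mpr (C₁.min'_le a₂ ha₂C₁))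
      have f4 : h b₁ ≤ h a₂ := hmono (le_of_lt (lt_of_le_of_lt hb₁le f2))
      have f5 : ∀ x ∈ C₁.erase a₁, x ≠ a₂ → h a₂ < x := by
        intro x hx hxa₂
        rcases hc₁ a₂ ha₂C₁ x (Finset.mem_of_mem_erase hx) (Ne.symm hxa₂) with hlt | hlt
        · exact hlt
        · exact absurd (lt_of_le_of_lt (hge x) hlt) (not_lt.mpr (ha₂min x hx))
      have f6 : ∀ x ∈ C₂, x ≠ b₁ → h b₁ < x := by
        intro x hx hxb₁
        rcases hc₂ b₁ hb₁mem x hx (Ne.symm hxb₁) with hlt | hlt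
        · exact hlt
        · exact absurd (lt_of_le_of_lt (hge x) hlt) (not_lt.mpr (C₂.min'_le x hx))
      -- memberships of D₁, D₂ inside the erased union
      have hDsub : ∀ x, x ∈ D₁ ∨ x ∈ D₂ → x ∈ C₁.erase a₁ ∨ x ∈ C₂.erase b₁ := by
        intro x hx
        have : x ∈ D₁ ∪ D₂ := Finset.mem_union.mpr hx
        rw [hDun] at this
        exact Finset.mem_union.mp this
      have ha₁nD₁ : a₁ ∉ D₁ := by
        intro hx
        rcases hDsub a₁ (Or.inl hx) with hx' | hx'
        · exact (Finset.mem_erase.mp hx').1 rfl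
        · exact ha₁nC₂ (Finset.mem_of_mem_erase hx')
      have ha₁nD₂ : a₁ ∉ D₂ := by
        intro hx
        rcases hDsub a₁ (Or.inr hx) with hx' | hx'
        · exact (Finset.mem_erase.mp hx').1 rfl
        · exact ha₁nC₂ (Finset.mem_of_mem_erase hx')
      have hb₁nD₁ : b₁ ∉ D₁ := by
        intro hx
        rcases hDsub b₁ (Or.inl hx) with hx' | hx'
        · exact hb₁nC₁ (Finset.mem_of_mem_erase hx')
        · exact (Finset.mem_erase.mp hx').1 rfl
      have hb₁nD₂ : b₁ ∉ D₂ := by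
        intro hx
        rcases hDsub b₁ (Or.inr hx) with hx' | hx'
        · exact hb₁nC₁ (Finset.mem_of_mem_erase hx')
        · exact (Finset.mem_erase.mp hx').1 rfl
      have ha₁b₁ : a₁ ≠ b₁ := fun he => ha₁nC₂ (he ▸ hb₁mem)
      -- b₁ is below everything in D₁
      have hb₁D₁ : ∀ y ∈ D₁, h b₁ < y := by
        intro y hy
        rcases hDsub y (Or.inl hy) with hy' | hy'
        · -- y ∈ C₁.erase a₁; y ≠ a₂ since a₂ ∈ D₂
          have hya₂ : y ≠ a₂ := fun he =>
            (Finset.disjoint_left.mp hDdisj hy) (he ▸ ha₂D₂)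
          exact lt_of_le_of_lt f4 (f5 y hy' hya₂)
        · exact f6 y (Finset.mem_of_mem_erase hy') (Finset.mem_erase.mp hy').1
      -- a₁ is below everything in D₂
      have ha₁D₂ : ∀ y ∈ D₂, h a₁ < y := by
        intro y hy
        by_cases hya₂ : y = a₂
        · exact hya₂ ▸ f2
        · exact lt_of_lt_of_le f2 (le_trans (hge a₂) (le_of_lt (ha₂lt y hy hya₂)))
      refine ⟨insert b₁ D₁, insert a₁ D₂, a₁, ?_, ?_, ?_, ?_, ?_, ?_, ha₁mem,
        fun x hx => C₁.min'_le x hx, Finset.mem_insert_self _ _, ?_⟩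
      · rw [Finset.disjoint_left]
        intro x hx hx'
        rcases Finset.mem_insert.mp hx with rfl | hx
        · rcases Finset.mem_insert.mp hx' with he | hx'
          · exact ha₁b₁ he.symm
          · exact hb₁nD₂ hx'
        · rcases Finset.mem_insert.mp hx' with rfl | hx'
          · exact ha₁nD₁ hx
          · exact Finset.disjoint_left.mp hDdisj hx hx'
      · -- C₁' chain
        intro x hx y hy hxy
        rcases Finset.mem_insert.mp hx with rfl | hx
        · rcases Finset.mem_insert.mp hy with rfl | hy
          · exact absurd rfl hxy
          · exact Or.inl (hb₁D₁ y hy)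
        · rcases Finset.mem_insert.mp hy with rfl | hy
          · exact Or.inr (hb₁D₁ x hx)
          · exact hD₁c x hx y hy hxy
      · -- C₂' chain
        intro x hx y hy hxy
        rcases Finset.mem_insert.mp hx with rfl | hx
        · rcases Finset.mem_insert.mp hy with rfl | hy
          · exact absurd rfl hxy
          · exact Or.inl (ha₁D₂ y hy)
        · rcases Finset.mem_insert.mp hy with rfl | hy
          · exact Or.inr (ha₁D₂ x hx)
          · exact hD₂c x hx y hy hxy
      · -- union
        ext x
        simp only [Finset.mem_union, Finset.mem_insert]
        constructor
        · rintro ((rfl | hx) | (rfl | hx))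
          · exact Or.inr hb₁mem
          · rcases hDsub x (Or.inl hx) with hx' | hx'
            · exact Or.inl (Finset.mem_of_mem_erase hx')
            · exact Or.inr (Finset.mem_of_mem_erase hx')
          · exact Or.inl ha₁mem
          · rcases hDsub x (Or.inr hx) with hx' | hx'
            · exact Or.inl (Finset.mem_of_mem_erase hx')
            · exact Or.inr (Finset.mem_of_mem_erase hx')
        · intro hx
          by_cases hxa : x = a₁
          · exact Or.inr (Or.inl hxa)
          by_cases hxb : x = b₁
          · exact Or.inl (Or.inl hxb)
          have : x ∈ D₁ ∪ D₂ := by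
            rw [hDun]
            rcases hx with hx | hx
            · exact Finset.mem_union.mpr (Or.inl (Finset.mem_erase.mpr ⟨hxa, hx⟩))
            · exact Finset.mem_union.mpr (Or.inr (Finset.mem_erase.mpr ⟨hxb, hx⟩))
          rcases Finset.mem_union.mp this with hx' | hx'
          · exact Or.inl (Or.inr hx')
          · exact Or.inr (Or.inr hx')
      · rw [Finset.card_insert_of_notMem hb₁nD₁, hD₁card, hcard₁]
        omega
      · rw [Finset.card_insert_of_notMem ha₁nD₂, hD₂card, hcard₂]
        omega
      · intro x hx hxa
        rcases Finset.mem_insert.mp hx with rfl | hx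
        · exact absurd rfl hxa
        · exact ha₁D₂ x hx

/-- Exchange lemma for chains in the poset `P_h` (where `i ≺_h j ↔ h i < j`) of a
Hessenberg function `h`: if `C₁, C₂` are disjoint chains with `|C₁| > |C₂| + 1`, then
there are disjoint chains `C₁', C₂'` with `C₁' ∪ C₂' = C₁ ∪ C₂`, `|C₁'| = |C₁| - 1` and
`|C₂'| = |C₂| + 1`. -/
theorem stmt_13 (n : ℕ) (h : Fin n → Fin n) (hmono : Monotone h) (hge : ∀ i, i ≤ h i)
    (C₁ C₂ : Finset (Fin n)) (hdisj : Disjoint C₁ C₂)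
    (hc₁ : ∀ a ∈ C₁, ∀ b ∈ C₁, a ≠ b → h a < b ∨ h b < a)
    (hc₂ : ∀ a ∈ C₂, ∀ b ∈ C₂, a ≠ b → h a < b ∨ h b < a)
    (hcard : C₂.card + 1 < C₁.card) :
    ∃ C₁' C₂' : Finset (Fin n), Disjoint C₁' C₂' ∧
      (∀ a ∈ C₁', ∀ b ∈ C₁', a ≠ b → h a < b ∨ h b < a) ∧
      (∀ a ∈ C₂', ∀ b ∈ C₂', a ≠ b → h a < b ∨ h b < a) ∧
      C₁' ∪ C₂' = C₁ ∪ C₂ ∧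
      C₁'.card = C₁.card - 1 ∧ C₂'.card = C₂.card + 1 := by
  obtain ⟨C₁', C₂', a, h1, h2, h3, h4, h5, h6, _⟩ :=
    stmt_13_aux n h hmono hge C₂.card C₁ C₂ le_rfl hdisj hc₁ hc₂ hcard
  exact ⟨C₁', C₂', h1, h2, h3, h4, h5, h6⟩
end

section
/- Let 1 ≤ m ≤ n, let ν be a partition of n − m, and let μ be a partition of n. Suppose the skew shape μ'/ν' is a horizontal strip of size m (i.e., ν'_j ≤ μ'_j for all j, Σ_j (μ'_j − ν'_j) = m, and μ'_{j+1} ≤ ν'_j for all j). Then there exists an (n−m) × m matrix Z over the field F such that the block matrix A = [[J_ν, Z],[0, 0]] (with J_ν in the top-left (n−m)×(n−m) block and zero blocks below) is conjugate under GL_n(F) to J_μ. Conversely, if such a Z exists then μ'/ν' is a horizontal strip of size m. -/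
open scoped Classical

/-- The nilpotent block-diagonal Jordan matrix of type `μ` (block sizes `μ 0, μ 1, ...`). -/
noncomputable def Jmat (F : Type*) [Field F] (n : ℕ) (μ : ℕ → ℕ) :
    Matrix (Fin n) (Fin n) F := fun a b =>
  if (b : ℕ) = (a : ℕ) + 1 ∧ ∀ t, (∑ i ∈ Finset.range t, μ i) ≠ (a : ℕ) + 1 then 1 else 0

/-- `conjP s μ j` is the `j`-th part (1-indexed) of the conjugate of the partition with
parts `μ 0, ..., μ (s-1)`. -/
def conjP (s : ℕ) (μ : ℕ → ℕ) (j : ℕ) : ℕ :=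
  ((Finset.range s).filter fun i => j ≤ μ i).card

namespace Strip
open Matrix

/-- partial sums -/
def psum (lam : ℕ → ℕ) (t : ℕ) : ℕ := ∑ i ∈ Finset.range t, lam i

lemma psum_succ (lam : ℕ → ℕ) (t : ℕ) : psum lam (t+1) = psum lam t + lam t :=
  Finset.sum_range_succ _ _

lemma psum_mono (lam : ℕ → ℕ) : Monotone (psum lam) := by
  intro a b hab
  exact Finset.sum_le_sum_of_subset (Finset.range_subset_range.2 hab)

lemma psum_add (lam : ℕ → ℕ) (i o : ℕ) : psum lam i + o ≤ psum lam (i+1) → True := fun _ => trivial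

/-- decomposition existence -/
lemma exists_decomp (lam : ℕ → ℕ) (s : ℕ) {p : ℕ} (hp : p < psum lam s) :
    ∃ i < s, ∃ o < lam i, p = psum lam i + o := by
  induction s with
  | zero => simp [psum] at hp
  | succ s ih =>
    by_cases h : p < psum lam s
    · obtain ⟨i, hi, o, ho, rfl⟩ := ih h
      exact ⟨i, Nat.lt_succ_of_lt hi, o, ho, rfl⟩
    · push_neg at h
      refine ⟨s, Nat.lt_succ_self s, p - psum lam s, ?_, ?_⟩
      · rw [psum_succ] at hp; omega
      · omega

/-- uniqueness of decomposition -/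
lemma decomp_unique (lam : ℕ → ℕ) {i o i' o' : ℕ}
    (ho : o < lam i) (ho' : o' < lam i')
    (h : psum lam i + o = psum lam i' + o') : i = i' ∧ o = o' := by
  rcases lt_trichotomy i i' with hlt | heq | hgt
  · exfalso
    have h1 : psum lam i + o < psum lam (i+1) := by rw [psum_succ]; omega
    have h2 : psum lam (i+1) ≤ psum lam i' := psum_mono lam hlt
    omega
  · constructor
    · exact heq
    · subst heq; omega
  · exfalso
    have h1 : psum lam i' + o' < psum lam (i'+1) := by rw [psum_succ]; omega
    have h2 : psum lam (i'+1) ≤ psum lam i := psum_mono lam hgt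
    omega

/-- block index -/
noncomputable def blk (lam : ℕ → ℕ) (s p : ℕ) : ℕ :=
  if h : ∃ i, i < s ∧ ∃ o, o < lam i ∧ p = psum lam i + o then h.choose else 0

noncomputable def off (lam : ℕ → ℕ) (s p : ℕ) : ℕ := p - psum lam (blk lam s p)

lemma blk_off_spec (lam : ℕ → ℕ) (s : ℕ) {p : ℕ} (hp : p < psum lam s) :
    blk lam s p < s ∧ off lam s p < lam (blk lam s p) ∧ p = psum lam (blk lam s p) + off lam s p := by
  obtain ⟨i, hi, o, ho, hpe⟩ := exists_decomp lam s hp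
  have hex : ∃ i, i < s ∧ ∃ o, o < lam i ∧ p = psum lam i + o := ⟨i, hi, o, ho, hpe⟩
  rw [blk, dif_pos hex, off, blk, dif_pos hex]
  obtain ⟨h1, o', ho', hpe'⟩ := hex.choose_spec
  exact ⟨h1, by omega, by omega⟩

lemma blk_eq (lam : ℕ → ℕ) (s : ℕ) {i o : ℕ} (hi : i < s) (ho : o < lam i) :
    blk lam s (psum lam i + o) = i ∧ off lam s (psum lam i + o) = o := by
  have hp : psum lam i + o < psum lam s := by
    have h1 : psum lam i + o < psum lam (i+1) := by rw [psum_succ]; omega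
    exact lt_of_lt_of_le h1 (psum_mono lam hi)
  obtain ⟨h1, h2, h3⟩ := blk_off_spec lam s hp
  obtain ⟨hie, hoe⟩ := decomp_unique lam h2 ho h3.symm
  exact ⟨hie, hoe⟩


variable {F : Type*} [Field F]

lemma jmat_apply {n : ℕ} (lam : ℕ → ℕ) (s : ℕ) (hn : psum lam s = n)
    {p q : Fin n} {i o j r : ℕ} (hi : i < s) (ho : o < lam i) (hj : j < s) (hr : r < lam j)
    (hp : (p : ℕ) = psum lam i + o) (hq : (q : ℕ) = psum lam j + r) :
    Jmat F n lam p q = if j = i ∧ r = o + 1 then 1 else 0 := by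
  show (if (q : ℕ) = (p : ℕ) + 1 ∧ ∀ t, (∑ i ∈ Finset.range t, lam i) ≠ (p : ℕ) + 1 then (1:F) else 0) = _
  refine if_congr ?_ rfl rfl
  constructor
  · rintro ⟨hq1, hnot⟩
    have h1 : o + 1 ≤ lam i := ho
    rcases eq_or_lt_of_le h1 with he | hlt
    · exfalso
      exact hnot (i+1) (by rw [show (∑ x ∈ Finset.range (i+1), lam x) = psum lam (i+1) from rfl, psum_succ]; omega)
    · have : psum lam j + r = psum lam i + (o + 1) := by omega
      obtain ⟨h2, h3⟩ := decomp_unique lam hr hlt this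
      exact ⟨h2, h3⟩
  · rintro ⟨h1, h2⟩
    have hps : psum lam j = psum lam i := by rw [h1]
    refine ⟨by omega, fun t ht => ?_⟩
    have hst : (∑ x ∈ Finset.range t, lam x) = psum lam t := rfl
    have ht' : psum lam t = psum lam i + (o + 1) := by omega
    have hlami : lam j = lam i := by rw [h1]
    rcases le_or_gt t i with h | h
    · have := psum_mono lam h; omega
    · have h3 : psum lam (i+1) ≤ psum lam t := psum_mono lam h
      rw [psum_succ] at h3; omega

lemma jmat_pow_apply {n : ℕ} (lam : ℕ → ℕ) (s : ℕ) (hn : psum lam s = n) (k : ℕ)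
    {p q : Fin n} {i o j r : ℕ} (hi : i < s) (ho : o < lam i) (hj : j < s) (hr : r < lam j)
    (hp : (p : ℕ) = psum lam i + o) (hq : (q : ℕ) = psum lam j + r) :
    (Jmat F n lam ^ k) p q = if j = i ∧ r = o + k then 1 else 0 := by
  induction k generalizing q j r with
  | zero =>
    rw [pow_zero, Matrix.one_apply]
    refine if_congr ?_ rfl rfl
    constructor
    · rintro rfl
      have : psum lam j + r = psum lam i + o := by omega
      obtain ⟨h2, h3⟩ := decomp_unique lam hr ho this
      exact ⟨h2, by omega⟩
    · rintro ⟨rfl, rfl⟩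
      exact Fin.ext (by omega)
  | succ k ih =>
    rw [pow_succ, Matrix.mul_apply]
    rcases Nat.eq_zero_or_pos r with hr0 | hr1
    · rw [if_neg (by omega)]
      refine Finset.sum_eq_zero fun c _ => ?_
      have hc : (c : ℕ) < psum lam s := hn ▸ c.isLt
      obtain ⟨hc1, hc2, hc3⟩ := blk_off_spec lam s hc
      rw [jmat_apply lam s hn hc1 hc2 hj hr hc3 hq, if_neg (by omega), mul_zero]
    · have hc0lt : psum lam j + (r - 1) < n := by
        have : psum lam j + (r-1) < psum lam (j+1) := by rw [psum_succ]; omega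
        have := le_trans this.le ((psum_mono lam hj).trans hn.le)
        omega
      set c₀ : Fin n := ⟨psum lam j + (r - 1), hc0lt⟩ with hc₀
      have hco : (c₀ : ℕ) = psum lam j + (r-1) := rfl
      rw [Finset.sum_eq_single c₀]
      · rw [ih hj (by omega) hco, jmat_apply lam s hn hj (by omega) hj hr hco hq,
          if_pos (show j = j ∧ r = (r-1) + 1 from ⟨rfl, by omega⟩), mul_one]
        refine if_congr ?_ rfl rfl
        omega
      · intro c _ hne
        have hc : (c : ℕ) < psum lam s := hn ▸ c.isLt
        obtain ⟨hc1, hc2, hc3⟩ := blk_off_spec lam s hc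
        rw [jmat_apply lam s hn hc1 hc2 hj hr hc3 hq]
        rw [if_neg, mul_zero]
        rintro ⟨hb, hoc⟩
        refine hne (Fin.ext ?_)
        rw [hc3, hco, ← hb]; omega
      · intro h
        exact absurd (Finset.mem_univ c₀) h

section coords
variable {ι : Type*}

def coord (F : Type*) [Field F] {ι : Type*} (P : ι → Prop) : Submodule F (ι → F) where
  carrier := {v | ∀ i, P i → v i = 0}
  add_mem' := by intro a b ha hb i hi; simp only [Pi.add_apply, ha i hi, hb i hi, add_zero]
  zero_mem' := by intro i hi; rfl
  smul_mem' := by intro c a ha i hi; simp only [Pi.smul_apply, ha i hi, smul_zero]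

lemma mem_coord {P : ι → Prop} {v : ι → F} : v ∈ coord F P ↔ ∀ i, P i → v i = 0 := Iff.rfl

noncomputable def coordEquiv (P : ι → Prop) : (coord F P) ≃ₗ[F] ({i // ¬ P i} → F) where
  toFun := fun v i => v.val i.val
  map_add' := fun a b => rfl
  map_smul' := fun c a => rfl
  invFun := fun w => ⟨fun i => if h : P i then 0 else w ⟨i, h⟩, fun i hi => dif_pos hi⟩
  left_inv := by
    intro v; ext i
    by_cases h : P i
    · simp only [dif_pos h]; exact (v.2 i h).symm
    · simp only [dif_neg h]
  right_inv := by intro w; ext i; simp only [dif_neg i.2]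

lemma finrank_coord [Fintype ι] (P : ι → Prop) :
    Module.finrank F (coord F P) = (Finset.univ.filter fun i => ¬ P i).card := by
  rw [(coordEquiv P).finrank_eq, Module.finrank_fintype_fun_eq_card]
  simp [Fintype.card_subtype]

lemma coord_inf (P Q : ι → Prop) : coord F P ⊓ coord F Q = coord F (fun i => P i ∨ Q i) := by
  ext v
  simp only [Submodule.mem_inf, mem_coord]
  constructor
  · rintro ⟨h1, h2⟩ i (h | h)
    · exact h1 i h
    · exact h2 i h
  · intro h
    exact ⟨fun i hi => h i (Or.inl hi), fun i hi => h i (Or.inr hi)⟩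

end coords

lemma mulVecLin_pow {n : ℕ} (M : Matrix (Fin n) (Fin n) F) (k : ℕ) :
    (M ^ k).mulVecLin = (M.mulVecLin) ^ k := by
  induction k with
  | zero => rw [pow_zero, pow_zero, Matrix.mulVecLin_one]; rfl
  | succ k ih => rw [pow_succ, pow_succ, Matrix.mulVecLin_mul, ih]; rfl

lemma jmat_pow_mulVec {n : ℕ} (lam : ℕ → ℕ) (s : ℕ) (hn : psum lam s = n) (k : ℕ)
    (v : Fin n → F) {p : Fin n} {i o : ℕ} (hi : i < s) (ho : o < lam i)
    (hp : (p : ℕ) = psum lam i + o) :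
    ((Jmat F n lam ^ k) *ᵥ v) p =
      if h : o + k < lam i then
        v ⟨psum lam i + (o + k), by
          have h1 : psum lam i + (o+k) < psum lam (i+1) := by rw [psum_succ]; omega
          exact lt_of_lt_of_le h1 (le_trans (psum_mono lam hi) hn.le)⟩
      else 0 := by
  rw [Matrix.mulVec, dotProduct]
  by_cases h : o + k < lam i
  · rw [dif_pos h]
    set q₀ : Fin n := ⟨psum lam i + (o + k), _⟩ with hq₀
    have hco : (q₀ : ℕ) = psum lam i + (o + k) := rfl
    rw [Finset.sum_eq_single q₀]
    · rw [jmat_pow_apply lam s hn k hi ho hi h hp hco, if_pos ⟨rfl, rfl⟩, one_mul]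
    · intro q _ hne
      have hq : (q : ℕ) < psum lam s := hn ▸ q.isLt
      obtain ⟨hq1, hq2, hq3⟩ := blk_off_spec lam s hq
      rw [jmat_pow_apply lam s hn k hi ho hq1 hq2 hp hq3, if_neg, zero_mul]
      rintro ⟨hb, hoc⟩
      refine hne (Fin.ext ?_)
      rw [hq3, hco, hb, hoc]
    · intro h; exact absurd (Finset.mem_univ q₀) h
  · rw [dif_neg h]
    refine Finset.sum_eq_zero fun q _ => ?_
    have hq : (q : ℕ) < psum lam s := hn ▸ q.isLt
    obtain ⟨hq1, hq2, hq3⟩ := blk_off_spec lam s hq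
    rw [jmat_pow_apply lam s hn k hi ho hq1 hq2 hp hq3, if_neg, zero_mul]
    rintro ⟨hb, hoc⟩
    rw [hb] at hq2
    omega

lemma ker_jmat_pow {n : ℕ} (lam : ℕ → ℕ) (s : ℕ) (hn : psum lam s = n) (k : ℕ) :
    LinearMap.ker ((Matrix.mulVecLin (Jmat F n lam)) ^ k) =
      coord F (fun q : Fin n => k ≤ off lam s q) := by
  rw [← mulVecLin_pow]
  ext v
  rw [LinearMap.mem_ker, mem_coord]
  constructor
  · intro hv q hq
    have hqlt : (q : ℕ) < psum lam s := hn ▸ q.isLt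
    obtain ⟨hq1, hq2, hq3⟩ := blk_off_spec lam s hqlt
    set j := blk lam s (q : ℕ)
    set r := off lam s (q : ℕ)
    have hplt : psum lam j + (r - k) < n := by
      have h1 : psum lam j + (r - k) < psum lam (j+1) := by rw [psum_succ]; omega
      exact lt_of_lt_of_le h1 (le_trans (psum_mono lam hq1) hn.le)
    set p : Fin n := ⟨psum lam j + (r - k), hplt⟩ with hpd
    have hpc : (p : ℕ) = psum lam j + (r - k) := rfl
    have := jmat_pow_mulVec lam s hn k v hq1 (show r - k < lam j by omega) hpc
    rw [dif_pos (show r - k + k < lam j by omega)] at this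
    have hz : ((Jmat F n lam ^ k) *ᵥ v) p = 0 := by
      have h2 := congrFun hv p
      rwa [Matrix.mulVecLin_apply] at h2
    rw [this] at hz
    rw [← hz]
    congr 1
    exact Fin.ext (by show (q:ℕ) = psum lam j + (r - k + k); omega)
  · intro hv
    have : (Jmat F n lam ^ k) *ᵥ v = 0 := by
      funext p
      have hplt : (p : ℕ) < psum lam s := hn ▸ p.isLt
      obtain ⟨hp1, hp2, hp3⟩ := blk_off_spec lam s hplt
      rw [jmat_pow_mulVec lam s hn k v hp1 hp2 hp3]
      by_cases h : off lam s (p : ℕ) + k < lam (blk lam s (p : ℕ))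
      · rw [dif_pos h]
        refine hv _ ?_
        obtain ⟨hb, ho⟩ := blk_eq lam s hp1 h
        rw [ho]; omega
      · rw [dif_neg h]; rfl
    rw [Matrix.mulVecLin_apply]
    exact this

lemma range_jmat_pow {n : ℕ} (lam : ℕ → ℕ) (s : ℕ) (hn : psum lam s = n) (k : ℕ) :
    LinearMap.range ((Matrix.mulVecLin (Jmat F n lam)) ^ k) =
      coord F (fun q : Fin n => lam (blk lam s (q : ℕ)) ≤ off lam s (q : ℕ) + k) := by
  rw [← mulVecLin_pow]
  ext v
  rw [LinearMap.mem_range, mem_coord]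
  constructor
  · rintro ⟨w, rfl⟩ q hq
    have hqlt : (q : ℕ) < psum lam s := hn ▸ q.isLt
    obtain ⟨hq1, hq2, hq3⟩ := blk_off_spec lam s hqlt
    rw [Matrix.mulVecLin_apply, jmat_pow_mulVec lam s hn k w hq1 hq2 hq3, dif_neg (by omega)]
  · intro hv
    refine ⟨fun b => if h : k ≤ off lam s (b : ℕ) then v ⟨(b : ℕ) - k, by omega⟩ else 0, ?_⟩
    funext p
    have hplt : (p : ℕ) < psum lam s := hn ▸ p.isLt
    obtain ⟨hp1, hp2, hp3⟩ := blk_off_spec lam s hplt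
    rw [Matrix.mulVecLin_apply, jmat_pow_mulVec lam s hn k _ hp1 hp2 hp3]
    by_cases h : off lam s (p : ℕ) + k < lam (blk lam s (p : ℕ))
    · rw [dif_pos h]
      obtain ⟨hb, ho⟩ := blk_eq lam s hp1 h
      rw [dif_pos (by rw [ho]; omega)]
      congr 1
      exact Fin.ext (by show psum lam (blk lam s (p:ℕ)) + (off lam s (p:ℕ) + k) - k = (p:ℕ); omega)
    · rw [dif_neg h]
      exact (hv p (by omega)).symm

lemma count_off_lt {n : ℕ} (lam : ℕ → ℕ) (s : ℕ) (hn : psum lam s = n) (k : ℕ) :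
    ((Finset.univ : Finset (Fin n)).filter fun q : Fin n => off lam s (q : ℕ) < k).card =
      ∑ i ∈ Finset.range s, min (lam i) k := by
  have hrhs : ∑ i ∈ Finset.range s, min (lam i) k =
      ((Finset.range s).sigma fun i => Finset.range (min (lam i) k)).card := by
    rw [Finset.card_sigma]
    simp [Finset.card_range]
  rw [hrhs]
  refine Finset.card_bij' (fun q _ => ⟨blk lam s (q : ℕ), off lam s (q : ℕ)⟩)
    (fun x hx => ⟨psum lam x.1 + x.2, ?_⟩) ?_ ?_ ?_ ?_
  · rw [Finset.mem_sigma, Finset.mem_range, Finset.mem_range] at hx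
    have h1 : psum lam x.1 + x.2 < psum lam (x.1+1) := by rw [psum_succ]; omega
    exact lt_of_lt_of_le h1 (le_trans (psum_mono lam hx.1) hn.le)
  · intro q hq
    rw [Finset.mem_filter] at hq
    have hqlt : (q : ℕ) < psum lam s := hn ▸ q.isLt
    obtain ⟨h1, h2, h3⟩ := blk_off_spec lam s hqlt
    simp only [Finset.mem_sigma, Finset.mem_range]
    refine ⟨h1, ?_⟩
    show off lam s (q : ℕ) < min (lam (blk lam s (q : ℕ))) k
    omega
  · intro x hx
    rw [Finset.mem_sigma, Finset.mem_range, Finset.mem_range] at hx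
    rw [Finset.mem_filter]
    obtain ⟨hb, ho⟩ := blk_eq lam s hx.1 (by omega : x.2 < lam x.1)
    refine ⟨Finset.mem_univ _, ?_⟩
    show off lam s (psum lam x.1 + x.2) < k
    rw [ho]; omega
  · intro q hq
    rw [Finset.mem_filter] at hq
    have hqlt : (q : ℕ) < psum lam s := hn ▸ q.isLt
    obtain ⟨h1, h2, h3⟩ := blk_off_spec lam s hqlt
    exact Fin.ext (by show psum lam (blk lam s (q : ℕ)) + off lam s (q : ℕ) = (q : ℕ); omega)
  · intro x hx
    rw [Finset.mem_sigma, Finset.mem_range, Finset.mem_range] at hx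
    obtain ⟨hb, ho⟩ := blk_eq lam s hx.1 (by omega : x.2 < lam x.1)
    show (⟨blk lam s ((psum lam x.1 + x.2)), off lam s ((psum lam x.1 + x.2))⟩ : Σ _ : ℕ, ℕ) = x
    rw [hb, ho]

lemma count_tops {n : ℕ} (lam : ℕ → ℕ) (s : ℕ) (hn : psum lam s = n) (k : ℕ) :
    ((Finset.univ : Finset (Fin n)).filter fun q : Fin n =>
        off lam s (q : ℕ) = 0 ∧ k < lam (blk lam s (q : ℕ))).card =
      ((Finset.range s).filter fun i => k + 1 ≤ lam i).card := by
  refine Finset.card_bij' (fun q _ => blk lam s (q : ℕ))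
    (fun i hi => ⟨psum lam i, ?_⟩) ?_ ?_ ?_ ?_
  · rw [Finset.mem_filter, Finset.mem_range] at hi
    have h1 : psum lam i + 0 < psum lam (i+1) := by rw [psum_succ]; omega
    exact lt_of_lt_of_le (by omega : psum lam i < psum lam (i+1)) (le_trans (psum_mono lam hi.1) hn.le)
  · intro q hq
    rw [Finset.mem_filter] at hq
    have hqlt : (q : ℕ) < psum lam s := hn ▸ q.isLt
    obtain ⟨h1, h2, h3⟩ := blk_off_spec lam s hqlt
    rw [Finset.mem_filter, Finset.mem_range]
    exact ⟨h1, by show k + 1 ≤ lam (blk lam s (q : ℕ)); omega⟩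
  · intro i hi
    rw [Finset.mem_filter, Finset.mem_range] at hi
    obtain ⟨hb, ho⟩ := blk_eq lam s hi.1 (by omega : 0 < lam i)
    rw [Finset.mem_filter]
    refine ⟨Finset.mem_univ _, ?_⟩
    show off lam s (psum lam i + 0) = 0 ∧ k < lam (blk lam s (psum lam i + 0))
    rw [Nat.add_zero] at hb ho ⊢
    rw [hb, ho]
    exact ⟨rfl, by omega⟩
  · intro q hq
    rw [Finset.mem_filter] at hq
    have hqlt : (q : ℕ) < psum lam s := hn ▸ q.isLt
    obtain ⟨h1, h2, h3⟩ := blk_off_spec lam s hqlt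
    exact Fin.ext (by show psum lam (blk lam s (q : ℕ)) = (q : ℕ); omega)
  · intro i hi
    rw [Finset.mem_filter, Finset.mem_range] at hi
    obtain ⟨hb, ho⟩ := blk_eq lam s hi.1 (by omega : 0 < lam i)
    show blk lam s ((psum lam i : ℕ)) = i
    rw [Nat.add_zero] at hb
    exact hb

lemma finrank_ker_jmat_pow {n : ℕ} (lam : ℕ → ℕ) (s : ℕ) (hn : psum lam s = n) (k : ℕ) :
    Module.finrank F (LinearMap.ker ((Matrix.mulVecLin (Jmat F n lam)) ^ k)) =
      ∑ i ∈ Finset.range s, min (lam i) k := by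
  rw [ker_jmat_pow lam s hn k, finrank_coord, ← count_off_lt lam s hn k]
  congr 1
  ext q
  simp [not_le]

lemma finrank_ker_inf_range {n : ℕ} (lam : ℕ → ℕ) (s : ℕ) (hn : psum lam s = n) (k : ℕ) :
    Module.finrank F ↥(LinearMap.ker (Matrix.mulVecLin (Jmat F n lam)) ⊓
        LinearMap.range ((Matrix.mulVecLin (Jmat F n lam)) ^ k)) =
      conjP s lam (k + 1) := by
  have h1 : LinearMap.ker (Matrix.mulVecLin (Jmat F n lam)) =
      coord F (fun q : Fin n => 1 ≤ off lam s (q : ℕ)) := by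
    rw [← ker_jmat_pow lam s hn 1, pow_one]
  rw [h1, range_jmat_pow lam s hn k, coord_inf, finrank_coord, conjP, ← count_tops lam s hn k]
  congr 1
  ext q
  simp only [Finset.mem_filter, Finset.mem_univ, true_and, not_or, not_le]
  omega

lemma kfun_succ (lam : ℕ → ℕ) (s k : ℕ) :
    ∑ i ∈ Finset.range s, min (lam i) (k + 1) =
      (∑ i ∈ Finset.range s, min (lam i) k) + conjP s lam (k + 1) := by
  rw [conjP, Finset.card_filter, ← Finset.sum_add_distrib]
  refine Finset.sum_congr rfl fun i _ => ?_
  split_ifs with h <;> omega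

lemma sum_conjP (lam : ℕ → ℕ) (s N : ℕ) :
    ∑ j ∈ Finset.Icc 1 N, conjP s lam j = ∑ i ∈ Finset.range s, min (lam i) N := by
  induction N with
  | zero => simp
  | succ N ih =>
    rw [Finset.sum_Icc_succ_top (by omega : 1 ≤ N + 1), ih, kfun_succ]

-- powers intertwine
lemma pow_comm_of_comm {M N : Type*} [AddCommGroup M] [AddCommGroup N] [Module F M] [Module F N]
    (φ : M →ₗ[F] N) (f : Module.End F M) (g : Module.End F N)
    (h : g ∘ₗ φ = φ ∘ₗ f) (k : ℕ) : (g ^ k) ∘ₗ φ = φ ∘ₗ (f ^ k) := by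
  induction k with
  | zero => simp [pow_zero]; rfl
  | succ k ih =>
    rw [pow_succ, pow_succ]
    have : (g ^ k * g) ∘ₗ φ = (g ^ k) ∘ₗ (g ∘ₗ φ) := rfl
    rw [this, h, ← LinearMap.comp_assoc, ih]
    rfl

lemma ker_pow_conj {M N : Type*} [AddCommGroup M] [AddCommGroup N] [Module F M] [Module F N]
    (Φ : M ≃ₗ[F] N) (f : Module.End F M) (g : Module.End F N)
    (h : g ∘ₗ (Φ : M →ₗ[F] N) = (Φ : M →ₗ[F] N) ∘ₗ f) (k : ℕ) :
    LinearMap.ker (g ^ k) = Submodule.map (Φ : M →ₗ[F] N) (LinearMap.ker (f ^ k)) ∧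
    LinearMap.range (g ^ k) = Submodule.map (Φ : M →ₗ[F] N) (LinearMap.range (f ^ k)) := by
  have hk := pow_comm_of_comm (Φ : M →ₗ[F] N) f g h k
  have happ : ∀ x, (g ^ k) (Φ x) = Φ ((f ^ k) x) := by
    intro x
    have h2 := LinearMap.congr_fun hk x
    simpa using h2
  constructor
  · ext y
    simp only [LinearMap.mem_ker, Submodule.mem_map, LinearEquiv.coe_coe]
    constructor
    · intro hy
      refine ⟨Φ.symm y, ?_, Φ.apply_symm_apply y⟩
      have h3 : Φ ((f ^ k) (Φ.symm y)) = Φ 0 := by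
        rw [← happ, Φ.apply_symm_apply, hy, map_zero]
      exact Φ.injective h3
    · rintro ⟨x, hx, rfl⟩
      rw [happ, hx, map_zero]
  · ext y
    simp only [LinearMap.mem_range, Submodule.mem_map, LinearEquiv.coe_coe]
    constructor
    · rintro ⟨x, rfl⟩
      refine ⟨(f ^ k) (Φ.symm x), ⟨Φ.symm x, rfl⟩, ?_⟩
      rw [← happ, Φ.apply_symm_apply]
    · rintro ⟨x, ⟨w, rfl⟩, rfl⟩
      exact ⟨Φ w, happ w⟩

lemma ker_pow_le {M : Type*} [AddCommGroup M] [Module F M] (u : Module.End F M) (k : ℕ) :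
    LinearMap.ker (u ^ k) ≤ LinearMap.ker (u ^ (k + 1)) := by
  intro x hx
  rw [LinearMap.mem_ker] at hx ⊢
  rw [pow_succ']
  show u ((u ^ k) x) = 0
  rw [hx, map_zero]

lemma converse_dir {n m sν sμ : ℕ} {ν μ : ℕ → ℕ} (hmn : m ≤ n)
    (hνn : psum ν sν = n - m) (hμn : psum μ sμ = n)
    (Z : Matrix (Fin (n - m)) (Fin m) F) (g : (Matrix (Fin n) (Fin n) F)ˣ)
    (hg : (g : Matrix (Fin n) (Fin n) F) *
          (Matrix.reindex (finSumFinEquiv.trans (finCongr (Nat.sub_add_cancel hmn)))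
            (finSumFinEquiv.trans (finCongr (Nat.sub_add_cancel hmn)))
            (Matrix.fromBlocks (Jmat F (n - m) ν) Z 0 0)) *
          (↑g⁻¹ : Matrix (Fin n) (Fin n) F) = Jmat F n μ) :
    (∀ j, 1 ≤ j → conjP sν ν j ≤ conjP sμ μ j) ∧
    (∀ j, 1 ≤ j → conjP sμ μ (j + 1) ≤ conjP sν ν j) := by
  classical
  set e : (Fin (n - m) ⊕ Fin m) ≃ Fin n :=
    finSumFinEquiv.trans (finCongr (Nat.sub_add_cancel hmn)) with he
  set B : Matrix (Fin (n - m) ⊕ Fin m) (Fin (n - m) ⊕ Fin m) F :=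
    Matrix.fromBlocks (Jmat F (n - m) ν) Z 0 0 with hB
  set u : Module.End F ((Fin (n - m) ⊕ Fin m) → F) := Matrix.mulVecLin B with hu
  set jμ : Module.End F (Fin n → F) := Matrix.mulVecLin (Jmat F n μ) with hjμ
  set jν : Module.End F (Fin (n - m) → F) := Matrix.mulVecLin (Jmat F (n - m) ν) with hjν
  have hgg : ((g : Matrix (Fin n) (Fin n) F) * (↑g⁻¹ : Matrix (Fin n) (Fin n) F)) = 1 := Units.mul_inv g
  have hgg' : ((↑g⁻¹ : Matrix (Fin n) (Fin n) F) * (g : Matrix (Fin n) (Fin n) F)) = 1 := Units.inv_mul g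
  let ge : (Fin n → F) ≃ₗ[F] (Fin n → F) :=
    LinearEquiv.ofLinear (Matrix.mulVecLin (↑g : Matrix (Fin n) (Fin n) F))
      (Matrix.mulVecLin (↑g⁻¹ : Matrix (Fin n) (Fin n) F))
      (by rw [← Matrix.mulVecLin_mul, hgg, Matrix.mulVecLin_one])
      (by rw [← Matrix.mulVecLin_mul, hgg', Matrix.mulVecLin_one])
  let Φ : ((Fin (n - m) ⊕ Fin m) → F) ≃ₗ[F] (Fin n → F) :=
    (LinearEquiv.funCongrLeft F F e.symm).trans ge
  have hgr : Jmat F n μ * (↑g : Matrix (Fin n) (Fin n) F) =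
      (↑g : Matrix (Fin n) (Fin n) F) * (Matrix.reindex e e B) := by
    rw [← hg]
    rw [mul_assoc, mul_assoc, hgg', mul_one]
  have hΦ : jμ ∘ₗ (Φ : _ →ₗ[F] _) = (Φ : _ →ₗ[F] _) ∘ₗ u := by
    apply LinearMap.ext
    intro v
    show jμ (ge ((LinearEquiv.funCongrLeft F F e.symm) v)) = ge ((LinearEquiv.funCongrLeft F F e.symm) (u v))
    have hfc : ∀ w : (Fin (n - m) ⊕ Fin m) → F,
        (LinearEquiv.funCongrLeft F F e.symm) w = w ∘ ⇑e.symm := fun w => rfl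
    rw [hfc, hfc]
    show Jmat F n μ *ᵥ ((↑g : Matrix (Fin n) (Fin n) F) *ᵥ (v ∘ ⇑e.symm)) =
      (↑g : Matrix (Fin n) (Fin n) F) *ᵥ ((B *ᵥ v) ∘ ⇑e.symm)
    rw [Matrix.mulVec_mulVec, hgr, ← Matrix.mulVec_mulVec]
    congr 1
    have hvv : ((v ∘ ⇑e.symm) ∘ ⇑e.symm.symm) = v := by funext c; simp
    rw [Matrix.reindex_apply, Matrix.submatrix_mulVec_equiv, hvv]
  -- the inclusion ι
  let ι : (Fin (n - m) → F) →ₗ[F] ((Fin (n - m) ⊕ Fin m) → F) :=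
    { toFun := fun v => Sum.elim v 0
      map_add' := by intro a b; funext c; cases c <;> simp
      map_smul' := by intro c a; funext d; cases d <;> simp }
  have hι : Function.Injective ι := by
    intro a b hab
    funext x
    exact congrFun hab (Sum.inl x)
  have hcomm : u ∘ₗ ι = ι ∘ₗ jν := by
    apply LinearMap.ext
    intro v
    funext c
    cases c with
    | inl x =>
      show (B *ᵥ Sum.elim v 0) (Sum.inl x) = (Jmat F (n - m) ν *ᵥ v) x
      rw [Matrix.mulVec, dotProduct, Fintype.sum_sum_type]
      simp [hB, Matrix.mulVec, dotProduct]
    | inr y =>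
      show (B *ᵥ Sum.elim v 0) (Sum.inr y) = 0
      rw [Matrix.mulVec, dotProduct, Fintype.sum_sum_type]
      simp [hB]
  have hrangeι : LinearMap.range u ≤ LinearMap.range ι := by
    rintro x ⟨w, rfl⟩
    refine ⟨fun x => (B *ᵥ w) (Sum.inl x), ?_⟩
    funext c
    cases c with
    | inl x => rfl
    | inr y =>
      show (0 : F) = (B *ᵥ w) (Sum.inr y)
      rw [Matrix.mulVec, dotProduct, Fintype.sum_sum_type]
      simp [hB]
  have hpowι : ∀ k, (u ^ k) ∘ₗ ι = ι ∘ₗ (jν ^ k) := fun k => pow_comm_of_comm ι jν u hcomm k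
  have hpowιapp : ∀ k w, (u ^ k) (ι w) = ι ((jν ^ k) w) := by
    intro k w
    exact LinearMap.congr_fun (hpowι k) w
  -- dimension identities
  have hkerμ : ∀ k, Module.finrank F ↥(LinearMap.ker (u ^ k)) =
      ∑ i ∈ Finset.range sμ, min (μ i) k := by
    intro k
    have h1 := (ker_pow_conj Φ u jμ hΦ k).1
    have h2 : Module.finrank F ↥(LinearMap.ker (jμ ^ k)) =
        Module.finrank F ↥(LinearMap.ker (u ^ k)) := by
      rw [h1]
      exact LinearEquiv.finrank_map_eq Φ _
    rw [← h2]
    exact finrank_ker_jmat_pow μ sμ hμn k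
  have hinfW : ∀ k, LinearMap.ker (u ^ k) ⊓ LinearMap.range ι =
      Submodule.map ι (LinearMap.ker (jν ^ k)) := by
    intro k
    ext x
    constructor
    · intro hx
      obtain ⟨hxk, hxr⟩ := Submodule.mem_inf.mp hx
      obtain ⟨w, rfl⟩ := hxr
      refine Submodule.mem_map.mpr ⟨w, ?_, rfl⟩
      have hxk' : (u ^ k) (ι w) = 0 := hxk
      rw [hpowιapp] at hxk'
      exact LinearMap.mem_ker.mpr (hι (by rw [hxk', map_zero]))
    · intro hx
      obtain ⟨w, hw, rfl⟩ := Submodule.mem_map.mp hx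
      refine Submodule.mem_inf.mpr ⟨?_, ⟨w, rfl⟩⟩
      exact LinearMap.mem_ker.mpr (by rw [hpowιapp, LinearMap.mem_ker.mp hw, map_zero])
  have hkerν : ∀ k, Module.finrank F ↥(LinearMap.ker (u ^ k) ⊓ LinearMap.range ι) =
      ∑ i ∈ Finset.range sν, min (ν i) k := by
    intro k
    rw [hinfW k]
    rw [← (Submodule.equivMapOfInjective ι hι (LinearMap.ker (jν ^ k))).finrank_eq]
    exact finrank_ker_jmat_pow ν sν hνn k
  refine ⟨?_, ?_⟩
  · intro j hj
    obtain ⟨k, rfl⟩ : ∃ k, j = k + 1 := ⟨j - 1, by omega⟩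
    have e3a := Submodule.finrank_sup_add_finrank_inf_eq (LinearMap.ker (u ^ (k + 1))) (LinearMap.range ι)
    have e3b := Submodule.finrank_sup_add_finrank_inf_eq (LinearMap.ker (u ^ k)) (LinearMap.range ι)
    have e4 : Module.finrank F ↥(LinearMap.ker (u ^ k) ⊔ LinearMap.range ι) ≤
        Module.finrank F ↥(LinearMap.ker (u ^ (k + 1)) ⊔ LinearMap.range ι) :=
      Submodule.finrank_mono (sup_le_sup_right (ker_pow_le u k) _)
    have hKν1 := hkerν (k + 1)
    have hKν0 := hkerν k
    have hKμ1 := hkerμ (k + 1)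
    have hKμ0 := hkerμ k
    have hsν := kfun_succ ν sν k
    have hsμ := kfun_succ μ sμ k
    omega
  · intro j hj
    obtain ⟨k, rfl⟩ : ∃ k, j = k + 1 := ⟨j - 1, by omega⟩
    have h1 : Module.finrank F ↥(LinearMap.ker jμ ⊓ LinearMap.range (jμ ^ (k + 1))) =
        conjP sμ μ (k + 1 + 1) := finrank_ker_inf_range μ sμ hμn (k + 1)
    have h2 : Module.finrank F ↥(LinearMap.ker jν ⊓ LinearMap.range (jν ^ k)) =
        conjP sν ν (k + 1) := finrank_ker_inf_range ν sν hνn k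
    -- transfer to u
    have hker1 : LinearMap.ker jμ = Submodule.map (Φ : _ →ₗ[F] _) (LinearMap.ker u) := by
      have := (ker_pow_conj Φ u jμ hΦ 1).1
      rwa [pow_one, pow_one] at this
    have hrange1 : LinearMap.range (jμ ^ (k + 1)) =
        Submodule.map (Φ : _ →ₗ[F] _) (LinearMap.range (u ^ (k + 1))) :=
      (ker_pow_conj Φ u jμ hΦ (k + 1)).2
    have hΦinj : Function.Injective (Φ : ((Fin (n - m) ⊕ Fin m) → F) →ₗ[F] (Fin n → F)) := Φ.injective
    have h3 : LinearMap.ker jμ ⊓ LinearMap.range (jμ ^ (k + 1)) =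
        Submodule.map (Φ : _ →ₗ[F] _) (LinearMap.ker u ⊓ LinearMap.range (u ^ (k + 1))) := by
      rw [hker1, hrange1, Submodule.map_inf _ hΦinj]
    have h4 : Module.finrank F ↥(LinearMap.ker jμ ⊓ LinearMap.range (jμ ^ (k + 1))) =
        Module.finrank F ↥(LinearMap.ker u ⊓ LinearMap.range (u ^ (k + 1))) := by
      rw [h3]
      exact LinearEquiv.finrank_map_eq Φ _
    -- the key inclusion
    have h5 : LinearMap.ker u ⊓ LinearMap.range (u ^ (k + 1)) ≤
        Submodule.map ι (LinearMap.ker jν ⊓ LinearMap.range (jν ^ k)) := by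
      intro x hx
      obtain ⟨hxker, hxr⟩ := Submodule.mem_inf.mp hx
      obtain ⟨w, rfl⟩ := hxr
      have hx1 : (u ^ (k + 1)) w = (u ^ k) (u w) := by
        rw [pow_succ]
        rfl
      obtain ⟨w', hw'⟩ := hrangeι ⟨w, rfl⟩
      refine Submodule.mem_map.mpr ⟨(jν ^ k) w', Submodule.mem_inf.mpr ⟨?_, ⟨w', rfl⟩⟩, ?_⟩
      · have hxker' : u ((u ^ (k + 1)) w) = 0 := hxker
        refine LinearMap.mem_ker.mpr (hι ?_)
        rw [map_zero]
        have h9 : ι (jν ((jν ^ k) w')) = u (ι ((jν ^ k) w')) := (LinearMap.congr_fun hcomm _).symm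
        rw [h9, ← hpowιapp, hw', ← hx1]
        exact hxker'
      · rw [← hpowιapp, hw', ← hx1]
    have h6 : Module.finrank F ↥(LinearMap.ker u ⊓ LinearMap.range (u ^ (k + 1))) ≤
        Module.finrank F ↥(Submodule.map ι (LinearMap.ker jν ⊓ LinearMap.range (jν ^ k))) :=
      Submodule.finrank_mono h5
    have h7 : Module.finrank F ↥(Submodule.map ι (LinearMap.ker jν ⊓ LinearMap.range (jν ^ k))) =
        conjP sν ν (k + 1) := by
      rw [← (Submodule.equivMapOfInjective ι hι _).finrank_eq]
      exact h2
    omega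

lemma forward_dir {n m sν sμ : ℕ} {ν μ : ℕ → ℕ} (hmn : m ≤ n)
    (hνn : psum ν sν = n - m) (hμn : psum μ sμ = n)
    (hνzero : ∀ i, sν ≤ i → ν i = 0)
    (hrow1 : ∀ i, ν i ≤ μ i) (hrow2 : ∀ i, μ i ≤ ν i + 1)
    (hm : m = ((Finset.range sμ).filter fun i => ν i < μ i).card) :
    ∃ Z : Matrix (Fin (n - m)) (Fin m) F, ∃ g : (Matrix (Fin n) (Fin n) F)ˣ,
      (g : Matrix (Fin n) (Fin n) F) *
          (Matrix.reindex (finSumFinEquiv.trans (finCongr (Nat.sub_add_cancel hmn)))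
            (finSumFinEquiv.trans (finCongr (Nat.sub_add_cancel hmn)))
            (Matrix.fromBlocks (Jmat F (n - m) ν) Z 0 0)) *
          (↑g⁻¹ : Matrix (Fin n) (Fin n) F) = Jmat F n μ := by
  classical
  set e : (Fin (n - m) ⊕ Fin m) ≃ Fin n :=
    finSumFinEquiv.trans (finCongr (Nat.sub_add_cancel hmn)) with he
  set Fs : Finset ℕ := (Finset.range sμ).filter (fun i => ν i < μ i) with hFs
  set kc : ℕ → ℕ := fun i => ((Finset.range i).filter (fun i' => ν i' < μ i')).card with hkc
  have hk_lt : ∀ i ∈ Fs, kc i < m := by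
    intro i hi
    rw [hFs, Finset.mem_filter, Finset.mem_range] at hi
    have hsub : insert i ((Finset.range i).filter (fun i' => ν i' < μ i')) ⊆ Fs := by
      intro t ht
      rw [Finset.mem_insert] at ht
      rw [hFs, Finset.mem_filter, Finset.mem_range]
      rcases ht with rfl | ht
      · exact ⟨hi.1, hi.2⟩
      · rw [Finset.mem_filter, Finset.mem_range] at ht
        exact ⟨by omega, ht.2⟩
    have hnotmem : i ∉ (Finset.range i).filter (fun i' => ν i' < μ i') := by
      simp [Finset.mem_filter]
    have := Finset.card_le_card hsub
    rw [Finset.card_insert_of_notMem hnotmem] at this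
    rw [hm]
    have hkci : kc i = ((Finset.range i).filter (fun i' => ν i' < μ i')).card := rfl
    omega
  have hk_inj : ∀ i ∈ Fs, ∀ i' ∈ Fs, kc i = kc i' → i = i' := by
    have key : ∀ i i', i ∈ Fs → i' ∈ Fs → i < i' → kc i < kc i' := by
      intro i i' hi hi' hlt
      rw [hFs, Finset.mem_filter, Finset.mem_range] at hi hi'
      have hsub : insert i ((Finset.range i).filter (fun t => ν t < μ t)) ⊆
          (Finset.range i').filter (fun t => ν t < μ t) := by
        intro t ht
        rw [Finset.mem_insert] at ht
        rw [Finset.mem_filter, Finset.mem_range]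
        rcases ht with rfl | ht
        · exact ⟨hlt, hi.2⟩
        · rw [Finset.mem_filter, Finset.mem_range] at ht
          exact ⟨by omega, ht.2⟩
      have hnotmem : i ∉ (Finset.range i).filter (fun t => ν t < μ t) := by
        simp [Finset.mem_filter]
      have := Finset.card_le_card hsub
      rw [Finset.card_insert_of_notMem hnotmem] at this
      rw [hkc]
      simpa using this
    intro i hi i' hi' hke
    rcases lt_trichotomy i i' with h | h | h
    · exact absurd hke (by have := key i i' hi hi' h; omega)
    · exact h
    · exact absurd hke (by have := key i' i hi' hi h; omega)
  have hspec : ∀ p : Fin n, blk μ sμ (p : ℕ) < sμ ∧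
      off μ sμ (p : ℕ) < μ (blk μ sμ (p : ℕ)) ∧
      (p : ℕ) = psum μ (blk μ sμ (p : ℕ)) + off μ sμ (p : ℕ) :=
    fun p => blk_off_spec μ sμ (by rw [hμn]; exact p.isLt)
  have hblkν : ∀ p : Fin n, off μ sμ (p : ℕ) < ν (blk μ sμ (p : ℕ)) →
      blk μ sμ (p : ℕ) < sν := by
    intro p h
    by_contra hc
    push_neg at hc
    rw [hνzero _ hc] at h
    omega
  have hbound1 : ∀ p : Fin n, off μ sμ (p : ℕ) < ν (blk μ sμ (p : ℕ)) →
      psum ν (blk μ sμ (p : ℕ)) + off μ sμ (p : ℕ) < n - m := by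
    intro p h
    have h1 : psum ν (blk μ sμ (p : ℕ)) + off μ sμ (p : ℕ) < psum ν (blk μ sμ (p : ℕ) + 1) := by
      rw [psum_succ]; omega
    exact lt_of_lt_of_le h1 (le_trans (psum_mono ν (hblkν p h)) hνn.le)
  have hmemFs : ∀ p : Fin n, ¬ (off μ sμ (p : ℕ) < ν (blk μ sμ (p : ℕ))) →
      blk μ sμ (p : ℕ) ∈ Fs := by
    intro p h
    rw [hFs, Finset.mem_filter, Finset.mem_range]
    have := (hspec p).1
    have h2 := (hspec p).2.1
    exact ⟨this, by omega⟩
  have hbound2 : ∀ p : Fin n, ¬ (off μ sμ (p : ℕ) < ν (blk μ sμ (p : ℕ))) →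
      kc (blk μ sμ (p : ℕ)) < m := fun p h => hk_lt _ (hmemFs p h)
  set Z : Matrix (Fin (n - m)) (Fin m) F := Matrix.of fun a y =>
    if ∃ i, i ∈ Fs ∧ 1 ≤ ν i ∧ (y : ℕ) = kc i ∧ (a : ℕ) = psum ν i + (ν i - 1)
    then (1 : F) else 0 with hZ
  set πhat : Fin n → (Fin (n - m) ⊕ Fin m) := fun p =>
    if h : off μ sμ (p : ℕ) < ν (blk μ sμ (p : ℕ)) then
      Sum.inl ⟨psum ν (blk μ sμ (p : ℕ)) + off μ sμ (p : ℕ), hbound1 p h⟩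
    else Sum.inr ⟨kc (blk μ sμ (p : ℕ)), hbound2 p h⟩ with hπ
  -- the key entrywise lemma
  have hmain : ∀ p q : Fin n,
      (Matrix.fromBlocks (Jmat F (n - m) ν) Z 0 0) (πhat p) (πhat q) = Jmat F n μ p q := by
    intro p q
    obtain ⟨hip, hop, hpd⟩ := hspec p
    obtain ⟨hiq, hoq, hqd⟩ := hspec q
    rw [jmat_apply μ sμ hμn hip hop hiq hoq hpd hqd]
    by_cases hp : off μ sμ (p : ℕ) < ν (blk μ sμ (p : ℕ))
    · by_cases hq : off μ sμ (q : ℕ) < ν (blk μ sμ (q : ℕ))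
      · rw [hπ]
        simp only [dif_pos hp, dif_pos hq, Matrix.fromBlocks_apply₁₁]
        exact jmat_apply ν sν hνn (hblkν p hp) hp (hblkν q hq) hq rfl rfl
      · -- p inl, q inr : Z entry
        rw [hπ]
        simp only [dif_pos hp, dif_neg hq, Matrix.fromBlocks_apply₁₂]
        have hqinFs := hmemFs q hq
        have hoqν : off μ sμ (q : ℕ) = ν (blk μ sμ (q : ℕ)) := by
          have := hrow2 (blk μ sμ (q : ℕ))
          omega
        rw [hZ]
        show (if ∃ i, i ∈ Fs ∧ 1 ≤ ν i ∧ kc (blk μ sμ (q : ℕ)) = kc i ∧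
            psum ν (blk μ sμ (p : ℕ)) + off μ sμ (p : ℕ) = psum ν i + (ν i - 1)
            then (1 : F) else 0) = _
        by_cases hC : blk μ sμ (q : ℕ) = blk μ sμ (p : ℕ) ∧
            off μ sμ (q : ℕ) = off μ sμ (p : ℕ) + 1
        · rw [if_pos, if_pos hC]
          refine ⟨blk μ sμ (q : ℕ), hqinFs, by omega, rfl, ?_⟩
          have h5 : ν (blk μ sμ (q : ℕ)) = ν (blk μ sμ (p : ℕ)) := by rw [hC.1]
          rw [hC.1]
          omega
        · rw [if_neg, if_neg hC]
          rintro ⟨i₀, hi₀Fs, hνi₀, hkeq, hdeq⟩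
          have hi₀ν : i₀ < sν := by
            by_contra hc
            push_neg at hc
            rw [hνzero _ hc] at hνi₀
            omega
          obtain ⟨hie, hoe⟩ := decomp_unique ν hp (by omega : ν i₀ - 1 < ν i₀) hdeq
          have hpFs : blk μ sμ (p : ℕ) ∈ Fs := by rw [hie]; exact hi₀Fs
          have hqp : blk μ sμ (q : ℕ) = blk μ sμ (p : ℕ) :=
            hk_inj _ hqinFs _ hpFs (by rw [hkeq, hie])
          refine hC ⟨hqp, ?_⟩
          have c1 : ν (blk μ sμ (q : ℕ)) = ν i₀ := by rw [hqp, hie]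
          omega
    · -- p inr : row of zeros
      rw [hπ]
      simp only [dif_neg hp]
      have hzero : (Matrix.fromBlocks (Jmat F (n - m) ν) Z 0 0)
          (Sum.inr (⟨kc (blk μ sμ (p : ℕ)), hbound2 p hp⟩ : Fin m)) (πhat q) = 0 := by
        rcases hπq : πhat q with x | y
        · rw [Matrix.fromBlocks_apply₂₁]; rfl
        · rw [Matrix.fromBlocks_apply₂₂]; rfl
      rw [hπ] at hzero
      rw [hzero, if_neg]
      rintro ⟨hbe, hoe⟩
      have h1 := hrow2 (blk μ sμ (p : ℕ))
      have h2 := hoq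
      rw [hbe] at h2
      omega
  -- injectivity
  have hinj : Function.Injective πhat := by
    intro p q hpq
    obtain ⟨hip, hop, hpd⟩ := hspec p
    obtain ⟨hiq, hoq, hqd⟩ := hspec q
    simp only [hπ] at hpq
    by_cases hp : off μ sμ (p : ℕ) < ν (blk μ sμ (p : ℕ)) <;>
      by_cases hq : off μ sμ (q : ℕ) < ν (blk μ sμ (q : ℕ))
    · rw [dif_pos hp, dif_pos hq] at hpq
      have h1 : psum ν (blk μ sμ (p : ℕ)) + off μ sμ (p : ℕ) =
          psum ν (blk μ sμ (q : ℕ)) + off μ sμ (q : ℕ) := by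
        have := Sum.inl.inj hpq
        exact congrArg Fin.val this
      obtain ⟨hie, hoe⟩ := decomp_unique ν hp hq h1
      have c1 : psum μ (blk μ sμ (p : ℕ)) = psum μ (blk μ sμ (q : ℕ)) := by rw [hie]
      exact Fin.ext (by omega)
    · rw [dif_pos hp, dif_neg hq] at hpq
      exact absurd hpq (by simp)
    · rw [dif_neg hp, dif_pos hq] at hpq
      exact absurd hpq (by simp)
    · rw [dif_neg hp, dif_neg hq] at hpq
      have h1 : kc (blk μ sμ (p : ℕ)) = kc (blk μ sμ (q : ℕ)) := by
        have := Sum.inr.inj hpq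
        exact congrArg Fin.val this
      have hie := hk_inj _ (hmemFs p hp) _ (hmemFs q hq) h1
      have hoe : off μ sμ (p : ℕ) = off μ sμ (q : ℕ) := by
        have h2 := hrow2 (blk μ sμ (p : ℕ))
        have h3 := hrow2 (blk μ sμ (q : ℕ))
        have c1 : ν (blk μ sμ (p : ℕ)) = ν (blk μ sμ (q : ℕ)) := by rw [hie]
        have c2 : μ (blk μ sμ (p : ℕ)) = μ (blk μ sμ (q : ℕ)) := by rw [hie]
        omega
      exact Fin.ext (by rw [hpd, hqd, hie, hoe])
  have hbij : Function.Bijective πhat := by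
    rw [Fintype.bijective_iff_injective_and_card]
    refine ⟨hinj, ?_⟩
    simp only [Fintype.card_sum, Fintype.card_fin]
    omega
  set τ : Fin n ≃ Fin n := (Equiv.ofBijective πhat hbij).trans e with hτ
  have hτa : ∀ p, τ p = e (πhat p) := fun p => rfl
  set Pm : Matrix (Fin n) (Fin n) F := Matrix.of fun a b => if τ a = b then 1 else 0 with hPm
  set Qm : Matrix (Fin n) (Fin n) F := Matrix.of fun a b => if a = τ b then 1 else 0 with hQm
  have hPX : ∀ (X : Matrix (Fin n) (Fin n) F), Pm * X = fun a b => X (τ a) b := by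
    intro X
    funext a b
    rw [Matrix.mul_apply]
    rw [Finset.sum_eq_single (τ a)]
    · rw [hPm]; simp
    · intro c _ hne
      rw [hPm]
      simp only [Matrix.of_apply]
      rw [if_neg (Ne.symm hne), zero_mul]
    · intro h; exact absurd (Finset.mem_univ _) h
  have hXQ : ∀ (X : Matrix (Fin n) (Fin n) F), X * Qm = fun a b => X a (τ b) := by
    intro X
    funext a b
    rw [Matrix.mul_apply]
    rw [Finset.sum_eq_single (τ b)]
    · rw [hQm]; simp
    · intro c _ hne
      rw [hQm]
      simp only [Matrix.of_apply]
      rw [if_neg hne, mul_zero]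
    · intro h; exact absurd (Finset.mem_univ _) h
  have hPQ : Pm * Qm = 1 := by
    rw [hXQ Pm]
    funext a b
    show Pm a (τ b) = (1 : Matrix (Fin n) (Fin n) F) a b
    rw [hPm, Matrix.one_apply]
    simp only [Matrix.of_apply]
    refine if_congr ⟨fun h => τ.injective h, fun h => by rw [h]⟩ rfl rfl
  have hQP : Qm * Pm = 1 := by
    ext a b
    rw [Matrix.mul_apply, Finset.sum_eq_single (τ.symm a)]
    · show (if a = τ (τ.symm a) then (1 : F) else 0) * (if τ (τ.symm a) = b then 1 else 0) =
        (1 : Matrix (Fin n) (Fin n) F) a b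
      rw [Matrix.one_apply]
      simp
    · intro c _ hne
      show (if a = τ c then (1 : F) else 0) * _ = 0
      rw [if_neg, zero_mul]
      intro h
      exact hne (by rw [h, Equiv.symm_apply_apply])
    · intro h; exact absurd (Finset.mem_univ _) h
  refine ⟨Z, ⟨Pm, Qm, hPQ, hQP⟩, ?_⟩
  show Pm * (Matrix.reindex e e (Matrix.fromBlocks (Jmat F (n - m) ν) Z 0 0)) * Qm = Jmat F n μ
  rw [hXQ, hPX]
  funext a b
  show (Matrix.reindex e e (Matrix.fromBlocks (Jmat F (n - m) ν) Z 0 0)) (τ a) (τ b) = _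
  rw [Matrix.reindex_apply, Matrix.submatrix_apply, hτa, hτa, Equiv.symm_apply_apply,
    Equiv.symm_apply_apply]
  exact hmain a b

end Strip

/-- Division algorithm: for `1 ≤ m ≤ n`, a partition `ν` of `n - m` and a partition `μ`
of `n`, the skew shape `μ'/ν'` is a horizontal strip of size `m` if and only if there
exists an `(n-m) × m` matrix `Z` such that the block matrix `[[J_ν, Z], [0, 0]]` is
`GL_n(F)`-conjugate to `J_μ`. -/
theorem stmt_16 (F : Type*) [Field F] (n m : ℕ) (hm : 1 ≤ m) (hmn : m ≤ n)
    (sν sμ : ℕ) (ν μ : ℕ → ℕ)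
    (hνpos : ∀ i < sν, 0 < ν i) (hνzero : ∀ i, sν ≤ i → ν i = 0)
    (hνanti : ∀ i j, i ≤ j → ν j ≤ ν i)
    (hνsum : ∑ i ∈ Finset.range sν, ν i = n - m)
    (hμpos : ∀ i < sμ, 0 < μ i) (hμzero : ∀ i, sμ ≤ i → μ i = 0)
    (hμanti : ∀ i j, i ≤ j → μ j ≤ μ i)
    (hμsum : ∑ i ∈ Finset.range sμ, μ i = n) :
    ((∀ j, 1 ≤ j → conjP sν ν j ≤ conjP sμ μ j) ∧
      (∑ j ∈ Finset.Icc 1 n, (conjP sμ μ j - conjP sν ν j)) = m ∧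
      (∀ j, 1 ≤ j → conjP sμ μ (j + 1) ≤ conjP sν ν j)) ↔
    ∃ Z : Matrix (Fin (n - m)) (Fin m) F, ∃ g : (Matrix (Fin n) (Fin n) F)ˣ,
      (g : Matrix (Fin n) (Fin n) F) *
          (Matrix.reindex (finSumFinEquiv.trans (finCongr (Nat.sub_add_cancel hmn)))
            (finSumFinEquiv.trans (finCongr (Nat.sub_add_cancel hmn)))
            (Matrix.fromBlocks (Jmat F (n - m) ν) Z 0 0)) *
          (↑g⁻¹ : Matrix (Fin n) (Fin n) F) = Jmat F n μ := by
  classical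
  have hνn : Strip.psum ν sν = n - m := hνsum
  have hμn : Strip.psum μ sμ = n := hμsum
  constructor
  · rintro ⟨h1, h2, h3⟩
    -- derive sν ≤ sμ
    have hc1ν : conjP sν ν 1 = sν := by
      rw [conjP, Finset.filter_true_of_mem, Finset.card_range]
      intro i hi
      rw [Finset.mem_range] at hi
      have := hνpos i hi
      omega
    have hc1μ : conjP sμ μ 1 = sμ := by
      rw [conjP, Finset.filter_true_of_mem, Finset.card_range]
      intro i hi
      rw [Finset.mem_range] at hi
      have := hμpos i hi
      omega
    have hsνμ : sν ≤ sμ := by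
      have := h1 1 le_rfl
      omega
    have hrow1 : ∀ i, ν i ≤ μ i := by
      intro i
      by_cases hi : i < sν
      · by_contra hc
        push_neg at hc
        have hj1 : 1 ≤ ν i := hνpos i hi
        have hlow : i + 1 ≤ conjP sν ν (ν i) := by
          rw [conjP]
          have hsub : Finset.range (i + 1) ⊆ (Finset.range sν).filter (fun t => ν i ≤ ν t) := by
            intro t ht
            rw [Finset.mem_range] at ht
            rw [Finset.mem_filter, Finset.mem_range]
            exact ⟨by omega, hνanti t i (by omega)⟩
          have := Finset.card_le_card hsub
          rwa [Finset.card_range] at this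
        have hup : conjP sμ μ (ν i) ≤ i := by
          rw [conjP]
          have hsub : (Finset.range sμ).filter (fun t => ν i ≤ μ t) ⊆ Finset.range i := by
            intro t ht
            rw [Finset.mem_filter, Finset.mem_range] at ht
            rw [Finset.mem_range]
            by_contra hti
            push_neg at hti
            have := hμanti i t hti
            omega
          have := Finset.card_le_card hsub
          rwa [Finset.card_range] at this
        have := h1 (ν i) hj1
        omega
      · push_neg at hi
        rw [hνzero i hi]
        omega
    have hrow2 : ∀ i, μ i ≤ ν i + 1 := by
      intro i
      by_contra hc
      push_neg at hc
      have hi : i < sμ := by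
        by_contra h
        push_neg at h
        rw [hμzero i h] at hc
        omega
      have hlow : i + 1 ≤ conjP sμ μ (ν i + 1 + 1) := by
        rw [conjP]
        have hsub : Finset.range (i + 1) ⊆ (Finset.range sμ).filter (fun t => ν i + 1 + 1 ≤ μ t) := by
          intro t ht
          rw [Finset.mem_range] at ht
          rw [Finset.mem_filter, Finset.mem_range]
          refine ⟨by omega, ?_⟩
          have := hμanti t i (by omega)
          omega
        have := Finset.card_le_card hsub
        rwa [Finset.card_range] at this
      have hup : conjP sν ν (ν i + 1) ≤ i := by
        rw [conjP]
        have hsub : (Finset.range sν).filter (fun t => ν i + 1 ≤ ν t) ⊆ Finset.range i := by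
          intro t ht
          rw [Finset.mem_filter, Finset.mem_range] at ht
          rw [Finset.mem_range]
          by_contra hti
          push_neg at hti
          have := hνanti i t hti
          omega
        have := Finset.card_le_card hsub
        rwa [Finset.card_range] at this
      have := h3 (ν i + 1) (by omega)
      omega
    have hνsμtot : ∑ i ∈ Finset.range sμ, ν i = n - m := by
      rw [← hνsum]
      symm
      refine Finset.sum_subset (Finset.range_subset_range.2 hsνμ) ?_
      intro x _ hx
      rw [Finset.mem_range] at hx
      push_neg at hx
      exact hνzero x hx
    have hsum1 : (∑ i ∈ Finset.range sμ, (μ i - ν i)) + ∑ i ∈ Finset.range sμ, ν i =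
        ∑ i ∈ Finset.range sμ, μ i := by
      rw [← Finset.sum_add_distrib]
      refine Finset.sum_congr rfl fun i _ => ?_
      have := hrow1 i
      omega
    have hcard : ((Finset.range sμ).filter fun i => ν i < μ i).card =
        ∑ i ∈ Finset.range sμ, (μ i - ν i) := by
      rw [Finset.card_filter]
      refine Finset.sum_congr rfl fun i _ => ?_
      have := hrow1 i
      have := hrow2 i
      split_ifs with h <;> omega
    have hmcard : m = ((Finset.range sμ).filter fun i => ν i < μ i).card := by
      rw [hcard]
      omega
    exact Strip.forward_dir hmn hνn hμn hνzero hrow1 hrow2 hmcard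
  · rintro ⟨Z, g, hg⟩
    obtain ⟨h1, h3⟩ := Strip.converse_dir hmn hνn hμn Z g hg
    refine ⟨h1, ?_, h3⟩
    have hμle : ∀ i < sμ, μ i ≤ n := by
      intro i hi
      rw [← hμsum]
      exact Finset.single_le_sum (f := μ) (fun t _ => Nat.zero_le _) (Finset.mem_range.2 hi)
    have hνle : ∀ i < sν, ν i ≤ n := by
      intro i hi
      have : ν i ≤ n - m := by
        rw [← hνsum]
        exact Finset.single_le_sum (f := ν) (fun t _ => Nat.zero_le _) (Finset.mem_range.2 hi)
      omega
    have hμtot : ∑ j ∈ Finset.Icc 1 n, conjP sμ μ j = n := by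
      rw [Strip.sum_conjP]
      rw [← hμsum]
      refine Finset.sum_congr rfl fun i hi => ?_
      rw [Finset.mem_range] at hi
      have := hμle i hi
      omega
    have hνtot : ∑ j ∈ Finset.Icc 1 n, conjP sν ν j = n - m := by
      rw [Strip.sum_conjP]
      rw [← hνsum]
      refine Finset.sum_congr rfl fun i hi => ?_
      rw [Finset.mem_range] at hi
      have := hνle i hi
      omega
    have hsplit : (∑ j ∈ Finset.Icc 1 n, (conjP sμ μ j - conjP sν ν j)) +
        ∑ j ∈ Finset.Icc 1 n, conjP sν ν j = ∑ j ∈ Finset.Icc 1 n, conjP sμ μ j := by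
      rw [← Finset.sum_add_distrib]
      refine Finset.sum_congr rfl fun j hj => ?_
      rw [Finset.mem_Icc] at hj
      have := h1 j hj.1
      omega
    omega
end
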